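/- (Cartan-theoretic identification of the generic rolling distribution.) Let ρ ∈ ℝ with ρ > 1 and ρ ≠ 3, let a ∈ ℂ satisfy a² = 4(ρ²+1)²/((ρ²−9)(ρ²−1/9)), and let s1 ∈ ℂ with s1 ≠ 0. In so(3,ℂ) ⊕ so(3,ℂ), set v0 = k1+k2, v1 = i1−ρ·i2, v2 = j1−ρ·j2, v3 = k1+ρ²·k2, v4 = j1−ρ³·j2, v5 = i1−ρ³·i2, and define T = i·v0, X1 = s1·(v1 + i·v2), X2 = s2·(v1 − i·v2), X3 = s3·v3 + t1·i·v0, X4 = s4·(v4 − i·v5) + t2·(v1 + i·v2), X5 = s5·(v4 + i·v5) + t3·(v1 − i·v2), where s2 = −5a/(s1(ρ²+1)), s3 = −5ia/(ρ²+1), s4 = 5i·s1·a/(3(ρ²+1)), s5 = 25i·a²/(3·s1·(ρ²+1)²), t1 = (3/2)a, t2 = −(7/6)·a·s1, t3 = 35a²/(6·s1·(ρ²+1)). Then (T, X1, X2, X3, X4, X5) is a basis of so(3,ℂ) ⊕ so(3,ℂ), and the brackets of these elements are exactly those of the type D.6_a bracket table. -/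

import Mathlib

set_option maxHeartbeats 4000000

private lemma scale_cancel {x y d : ℂ} (hd : d ≠ 0) (h : (x - y) * d = 0) : x = y := by
  rcases mul_eq_zero.mp h with h | h
  · exact sub_eq_zero.mp h
  · exact absurd h hd
theorem rolling_distribution_is_D6
    {L : Type*} [LieRing L] [LieAlgebra ℂ L]
    (i1 j1 k1 i2 j2 k2 : L)
    (hlindep : LinearIndependent ℂ ![i1, j1, k1, i2, j2, k2])
    (hlspan : Submodule.span ℂ (Set.range ![i1, j1, k1, i2, j2, k2]) = ⊤)
    (hl01 : ⁅i1, j1⁆ = k1)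
    (hl02 : ⁅i1, k1⁆ = -j1)
    (hl03 : ⁅i1, i2⁆ = 0)
    (hl04 : ⁅i1, j2⁆ = 0)
    (hl05 : ⁅i1, k2⁆ = 0)
    (hl12 : ⁅j1, k1⁆ = i1)
    (hl13 : ⁅j1, i2⁆ = 0)
    (hl14 : ⁅j1, j2⁆ = 0)
    (hl15 : ⁅j1, k2⁆ = 0)
    (hl23 : ⁅k1, i2⁆ = 0)
    (hl24 : ⁅k1, j2⁆ = 0)
    (hl25 : ⁅k1, k2⁆ = 0)
    (hl34 : ⁅i2, j2⁆ = k2)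
    (hl35 : ⁅i2, k2⁆ = -j2)
    (hl45 : ⁅j2, k2⁆ = i2)
    (ρ : ℝ) (hρ : 1 < ρ) (hρ3 : ρ ≠ 3)
    (a s1 s2 s3 s4 s5 t1 t2 t3 : ℂ)
    (ha : a ^ 2 = 4 * ((ρ : ℂ) ^ 2 + 1) ^ 2 / (((ρ : ℂ) ^ 2 - 9) * ((ρ : ℂ) ^ 2 - 1/9)))
    (hs1 : s1 ≠ 0)
    (hs2 : s2 = -5 * a / (s1 * ((ρ : ℂ) ^ 2 + 1)))
    (hs3 : s3 = -5 * Complex.I * a / ((ρ : ℂ) ^ 2 + 1))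
    (hs4 : s4 = 5 * Complex.I * s1 * a / (3 * ((ρ : ℂ) ^ 2 + 1)))
    (hs5 : s5 = 25 * Complex.I * a ^ 2 / (3 * s1 * ((ρ : ℂ) ^ 2 + 1) ^ 2))
    (ht1 : t1 = (3/2) * a)
    (ht2 : t2 = -(7/6) * a * s1)
    (ht3 : t3 = 35 * a ^ 2 / (6 * s1 * ((ρ : ℂ) ^ 2 + 1)))
    (v0 v1 v2 v3 v4 v5 : L)
    (hv0 : v0 = k1 + k2)
    (hv1 : v1 = i1 - (ρ : ℂ) • i2)
    (hv2 : v2 = j1 - (ρ : ℂ) • j2)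
    (hv3 : v3 = k1 + ((ρ : ℂ) ^ 2) • k2)
    (hv4 : v4 = j1 - ((ρ : ℂ) ^ 3) • j2)
    (hv5 : v5 = i1 - ((ρ : ℂ) ^ 3) • i2)
    (T X1 X2 X3 X4 X5 : L)
    (hT : T = Complex.I • v0)
    (hX1 : X1 = s1 • (v1 + Complex.I • v2))
    (hX2 : X2 = s2 • (v1 - Complex.I • v2))
    (hX3 : X3 = s3 • v3 + (t1 * Complex.I) • v0)
    (hX4 : X4 = s4 • (v4 - Complex.I • v5) + t2 • (v1 + Complex.I • v2))
    (hX5 : X5 = s5 • (v4 + Complex.I • v5) + t3 • (v1 - Complex.I • v2)) :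
    LinearIndependent ℂ ![T, X1, X2, X3, X4, X5] ∧
    Submodule.span ℂ (Set.range ![T, X1, X2, X3, X4, X5]) = ⊤ ∧
    (⁅T, X1⁆ = X1) ∧
    (⁅T, X2⁆ = -X2) ∧
    (⁅T, X3⁆ = 0) ∧
    (⁅T, X4⁆ = X4) ∧
    (⁅T, X5⁆ = -X5) ∧
    (⁅X1, X2⁆ = (3*a) • T + (-2 : ℂ) • X3) ∧
    (⁅X1, X3⁆ = (2*a) • X1 + (3 : ℂ) • X4) ∧
    (⁅X1, X4⁆ = 0) ∧
    (⁅X1, X5⁆ = (6 : ℂ) • T + (-a) • X3) ∧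
    (⁅X2, X3⁆ = (-(2*a)) • X2 + (-3 : ℂ) • X5) ∧
    (⁅X2, X4⁆ = (-6 : ℂ) • T + (a) • X3) ∧
    (⁅X2, X5⁆ = 0) ∧
    (⁅X3, X4⁆ = (-(a^2+3)) • X1) ∧
    (⁅X3, X5⁆ = (a^2+3) • X2) ∧
    (⁅X4, X5⁆ = (a*(a^2-1)) • T + (-2 : ℂ) • X3) := by
  -- real nonvanishing facts
  have hρ9 : (ρ^2 - 9 : ℝ) ≠ 0 := by
    intro h
    have h2 : (ρ-3)*(ρ+3) = 0 := by nlinarith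
    rcases mul_eq_zero.mp h2 with h3 | h3
    · exact hρ3 (by linarith)
    · linarith
  have hρ19 : (ρ^2 - 1/9 : ℝ) ≠ 0 := by nlinarith
  have hρ1 : (ρ^2 - 1 : ℝ) ≠ 0 := by nlinarith
  have hρ2 : (ρ^2 + 1 : ℝ) ≠ 0 := by nlinarith
  have hρ0 : (ρ : ℝ) ≠ 0 := by intro h; rw [h] at hρ; norm_num at hρ
  have hR2 : ((ρ:ℂ)^2+1) ≠ 0 := by
    intro h
    rw [show ((ρ:ℂ)^2+1) = ((ρ^2+1 : ℝ) : ℂ) by push_cast; ring] at h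
    exact hρ2 (by exact_mod_cast h)
  have hR9 : ((ρ:ℂ)^2-9) ≠ 0 := by
    intro h
    rw [show ((ρ:ℂ)^2-9) = ((ρ^2-9 : ℝ) : ℂ) by push_cast; ring] at h
    exact hρ9 (by exact_mod_cast h)
  have hR19 : ((ρ:ℂ)^2-1/9) ≠ 0 := by
    intro h
    rw [show ((ρ:ℂ)^2-1/9) = ((ρ^2-1/9 : ℝ) : ℂ) by push_cast; ring] at h
    exact hρ19 (by exact_mod_cast h)
  have hR1 : ((ρ:ℂ)^2-1) ≠ 0 := by
    intro h
    rw [show ((ρ:ℂ)^2-1) = ((ρ^2-1 : ℝ) : ℂ) by push_cast; ring] at h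
    exact hρ1 (by exact_mod_cast h)
  have hR0 : (ρ:ℂ) ≠ 0 := by exact_mod_cast hρ0
  have hD : (((ρ:ℂ)^2-9)*((ρ:ℂ)^2-1/9)) ≠ 0 := mul_ne_zero hR9 hR19
  have hkey : a^2 * (((ρ:ℂ)^2-9)*((ρ:ℂ)^2-1/9)) = 4*((ρ:ℂ)^2+1)^2 := by
    rw [ha]; exact div_mul_cancel₀ _ hD
  have hI : Complex.I^2 = -1 := Complex.I_sq
  have ha0 : a ≠ 0 := by
    intro h
    rw [h] at hkey
    have h2 : ((ρ:ℂ)^2+1)^2 = 0 := by linear_combination (-1/4 : ℂ) * hkey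
    exact hR2 (pow_eq_zero_iff (two_ne_zero) |>.mp h2)
  have hs2x : s2 * (s1*((ρ:ℂ)^2+1)) = -5*a := by
    rw [hs2]; field_simp
  have hs3x : s3 * ((ρ:ℂ)^2+1) = -5*Complex.I*a := by
    rw [hs3]; field_simp
  have hs4x : s4 * (3*((ρ:ℂ)^2+1)) = 5*Complex.I*s1*a := by
    rw [hs4]; field_simp; try ring
  have hs5x : s5 * (3*s1*((ρ:ℂ)^2+1)^2) = 25*Complex.I*a^2 := by
    rw [hs5]; field_simp; try ring
  have ht3x : t3 * (6*s1*((ρ:ℂ)^2+1)) = 35*a^2 := by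
    rw [ht3]; field_simp; try ring
  have hs2n : s2 ≠ 0 := by
    intro h; rw [h, zero_mul] at hs2x
    exact ha0 (by linear_combination (1/5 : ℂ) * hs2x)
  have hs3n : s3 ≠ 0 := by
    intro h; rw [h, zero_mul] at hs3x
    exact absurd hs3x.symm (by simp [Complex.I_ne_zero, ha0])
  have hs4n : s4 ≠ 0 := by
    intro h; rw [h, zero_mul] at hs4x
    exact absurd hs4x.symm (by simp [Complex.I_ne_zero, ha0, hs1])
  have hs5n : s5 ≠ 0 := by
    intro h; rw [h, zero_mul] at hs5x
    exact absurd hs5x.symm (by simp [Complex.I_ne_zero, ha0])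
  have hMne : ∀ (q : ℂ), q ≠ 0 → ∀ (α β γ : ℕ),
      q * s1^α * ((ρ:ℂ)^2+1)^β * (((ρ:ℂ)^2-9)*((ρ:ℂ)^2-1/9))^γ ≠ 0 :=
    fun q hq α β γ => mul_ne_zero (mul_ne_zero (mul_ne_zero hq (pow_ne_zero _ hs1))
      (pow_ne_zero _ hR2)) (pow_ne_zero _ hD)
  have hr01 : ⁅j1, i1⁆ = -k1 := by rw [← lie_skew, hl01]
  have hr02 : ⁅k1, i1⁆ = j1 := by rw [← lie_skew, hl02, neg_neg]
  have hr03 : ⁅i2, i1⁆ = 0 := by rw [← lie_skew, hl03, neg_zero]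
  have hr04 : ⁅j2, i1⁆ = 0 := by rw [← lie_skew, hl04, neg_zero]
  have hr05 : ⁅k2, i1⁆ = 0 := by rw [← lie_skew, hl05, neg_zero]
  have hr12 : ⁅k1, j1⁆ = -i1 := by rw [← lie_skew, hl12]
  have hr13 : ⁅i2, j1⁆ = 0 := by rw [← lie_skew, hl13, neg_zero]
  have hr14 : ⁅j2, j1⁆ = 0 := by rw [← lie_skew, hl14, neg_zero]
  have hr15 : ⁅k2, j1⁆ = 0 := by rw [← lie_skew, hl15, neg_zero]
  have hr23 : ⁅i2, k1⁆ = 0 := by rw [← lie_skew, hl23, neg_zero]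
  have hr24 : ⁅j2, k1⁆ = 0 := by rw [← lie_skew, hl24, neg_zero]
  have hr25 : ⁅k2, k1⁆ = 0 := by rw [← lie_skew, hl25, neg_zero]
  have hr34 : ⁅j2, i2⁆ = -k2 := by rw [← lie_skew, hl34]
  have hr35 : ⁅k2, i2⁆ = j2 := by rw [← lie_skew, hl35, neg_neg]
  have hr45 : ⁅k2, j2⁆ = -i2 := by rw [← lie_skew, hl45]
  have hbT1 : ⁅T, X1⁆ = X1 := by
    simp only [hT, hX1, hX2, hX3, hX4, hX5, hv0, hv1, hv2, hv3, hv4, hv5, lie_add, add_lie, lie_sub, sub_lie, lie_smul, smul_lie, lie_self, hl01, hl02, hl03, hl04, hl05, hl12, hl13, hl14, hl15, hl23, hl24, hl25, hl34, hl35, hl45, hr01, hr02, hr03, hr04, hr05, hr12, hr13, hr14, hr15, hr23, hr24, hr25, hr34, hr35, hr45, smul_zero, lie_zero, zero_lie, add_zero, zero_add, smul_neg, neg_zero]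
    try match_scalars
    all_goals first
      | (linear_combination ((-1)*s1) * hI)
      | (ring1)
      | (linear_combination ((1)*s1*(ρ:ℂ)) * hI)
  have hbT2 : ⁅T, X2⁆ = -X2 := by
    simp only [hT, hX1, hX2, hX3, hX4, hX5, hv0, hv1, hv2, hv3, hv4, hv5, lie_add, add_lie, lie_sub, sub_lie, lie_smul, smul_lie, lie_self, hl01, hl02, hl03, hl04, hl05, hl12, hl13, hl14, hl15, hl23, hl24, hl25, hl34, hl35, hl45, hr01, hr02, hr03, hr04, hr05, hr12, hr13, hr14, hr15, hr23, hr24, hr25, hr34, hr35, hr45, smul_zero, lie_zero, zero_lie, add_zero, zero_add, smul_neg, neg_zero]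
    try match_scalars
    all_goals first
      | ((refine scale_cancel (hMne ((1:ℂ)) (by norm_num) 1 1 0) ?_; linear_combination ((-5)*a) * hI + ((1) + (1)*Complex.I^2) * hs2x))
      | (ring1)
      | ((refine scale_cancel (hMne ((1:ℂ)) (by norm_num) 1 1 0) ?_; linear_combination ((5)*a*(ρ:ℂ)) * hI + ((-1)*(ρ:ℂ) + (-1)*(ρ:ℂ)*Complex.I^2) * hs2x))
  have hbT3 : ⁅T, X3⁆ = 0 := by
    simp only [hT, hX1, hX2, hX3, hX4, hX5, hv0, hv1, hv2, hv3, hv4, hv5, lie_add, add_lie, lie_sub, sub_lie, lie_smul, smul_lie, lie_self, hl01, hl02, hl03, hl04, hl05, hl12, hl13, hl14, hl15, hl23, hl24, hl25, hl34, hl35, hl45, hr01, hr02, hr03, hr04, hr05, hr12, hr13, hr14, hr15, hr23, hr24, hr25, hr34, hr35, hr45, smul_zero, lie_zero, zero_lie, add_zero, zero_add, smul_neg, neg_zero]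
    try match_scalars
    all_goals first
      | (ring1)
  have hbT4 : ⁅T, X4⁆ = X4 := by
    simp only [hT, hX1, hX2, hX3, hX4, hX5, hv0, hv1, hv2, hv3, hv4, hv5, lie_add, add_lie, lie_sub, sub_lie, lie_smul, smul_lie, lie_self, hl01, hl02, hl03, hl04, hl05, hl12, hl13, hl14, hl15, hl23, hl24, hl25, hl34, hl35, hl45, hr01, hr02, hr03, hr04, hr05, hr12, hr13, hr14, hr15, hr23, hr24, hr25, hr34, hr35, hr45, smul_zero, lie_zero, zero_lie, add_zero, zero_add, smul_neg, neg_zero]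
    try match_scalars
    all_goals first
      | (linear_combination (((7)/(6))*s1*a) * hI + ((-1) + (-1)*Complex.I^2) * ht2)
      | ((refine scale_cancel (hMne ((3:ℂ)) (by norm_num) 0 1 0) ?_; linear_combination ((-5)*s1*a*Complex.I) * hI + ((-1) + (-1)*Complex.I^2) * hs4x))
      | (ring1)
      | (linear_combination (((-7)/(6))*s1*a*(ρ:ℂ)) * hI + ((1)*(ρ:ℂ) + (1)*(ρ:ℂ)*Complex.I^2) * ht2)
      | ((refine scale_cancel (hMne ((3:ℂ)) (by norm_num) 0 1 0) ?_; linear_combination ((5)*s1*a*(ρ:ℂ)^3*Complex.I) * hI + ((1)*(ρ:ℂ)^3 + (1)*(ρ:ℂ)^3*Complex.I^2) * hs4x))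
  have hbT5 : ⁅T, X5⁆ = -X5 := by
    simp only [hT, hX1, hX2, hX3, hX4, hX5, hv0, hv1, hv2, hv3, hv4, hv5, lie_add, add_lie, lie_sub, sub_lie, lie_smul, smul_lie, lie_self, hl01, hl02, hl03, hl04, hl05, hl12, hl13, hl14, hl15, hl23, hl24, hl25, hl34, hl35, hl45, hr01, hr02, hr03, hr04, hr05, hr12, hr13, hr14, hr15, hr23, hr24, hr25, hr34, hr35, hr45, smul_zero, lie_zero, zero_lie, add_zero, zero_add, smul_neg, neg_zero]
    try match_scalars
    all_goals first
      | ((refine scale_cancel (hMne ((6:ℂ)) (by norm_num) 1 1 0) ?_; linear_combination ((35)*a^2) * hI + ((1) + (1)*Complex.I^2) * ht3x))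
      | ((refine scale_cancel (hMne ((3:ℂ)) (by norm_num) 1 2 0) ?_; linear_combination ((25)*a^2*Complex.I) * hI + ((1) + (1)*Complex.I^2) * hs5x))
      | (ring1)
      | ((refine scale_cancel (hMne ((6:ℂ)) (by norm_num) 1 1 0) ?_; linear_combination ((-35)*a^2*(ρ:ℂ)) * hI + ((-1)*(ρ:ℂ) + (-1)*(ρ:ℂ)*Complex.I^2) * ht3x))
      | ((refine scale_cancel (hMne ((3:ℂ)) (by norm_num) 1 2 0) ?_; linear_combination ((-25)*a^2*(ρ:ℂ)^3*Complex.I) * hI + ((-1)*(ρ:ℂ)^3 + (-1)*(ρ:ℂ)^3*Complex.I^2) * hs5x))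
  have hb12 : ⁅X1, X2⁆ = (3*a) • T + (-2 : ℂ) • X3 := by
    simp only [hT, hX1, hX2, hX3, hX4, hX5, hv0, hv1, hv2, hv3, hv4, hv5, lie_add, add_lie, lie_sub, sub_lie, lie_smul, smul_lie, lie_self, hl01, hl02, hl03, hl04, hl05, hl12, hl13, hl14, hl15, hl23, hl24, hl25, hl34, hl35, hl45, hr01, hr02, hr03, hr04, hr05, hr12, hr13, hr14, hr15, hr23, hr24, hr25, hr34, hr35, hr45, smul_zero, lie_zero, zero_lie, add_zero, zero_add, smul_neg, neg_zero]
    try match_scalars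
    all_goals first
      | (ring1)
      | ((refine scale_cancel (hMne ((1:ℂ)) (by norm_num) 1 2 0) ?_; linear_combination ((-2)*s1*Complex.I + (-2)*s1*(ρ:ℂ)^2*Complex.I) * hs2x + ((2)*s1 + (2)*s1*(ρ:ℂ)^2) * hs3x + ((2)*s1*Complex.I + (4)*s1*(ρ:ℂ)^2*Complex.I + (2)*s1*(ρ:ℂ)^4*Complex.I) * ht1))
      | ((refine scale_cancel (hMne ((1:ℂ)) (by norm_num) 1 2 0) ?_; linear_combination ((-2)*s1*(ρ:ℂ)^2*Complex.I + (-2)*s1*(ρ:ℂ)^4*Complex.I) * hs2x + ((2)*s1*(ρ:ℂ)^2 + (2)*s1*(ρ:ℂ)^4) * hs3x + ((2)*s1*Complex.I + (4)*s1*(ρ:ℂ)^2*Complex.I + (2)*s1*(ρ:ℂ)^4*Complex.I) * ht1))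
  have hb13 : ⁅X1, X3⁆ = (2*a) • X1 + (3 : ℂ) • X4 := by
    simp only [hT, hX1, hX2, hX3, hX4, hX5, hv0, hv1, hv2, hv3, hv4, hv5, lie_add, add_lie, lie_sub, sub_lie, lie_smul, smul_lie, lie_self, hl01, hl02, hl03, hl04, hl05, hl12, hl13, hl14, hl15, hl23, hl24, hl25, hl34, hl35, hl45, hr01, hr02, hr03, hr04, hr05, hr12, hr13, hr14, hr15, hr23, hr24, hr25, hr34, hr35, hr45, smul_zero, lie_zero, zero_lie, add_zero, zero_add, smul_neg, neg_zero]
    try match_scalars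
    all_goals first
      | ((refine scale_cancel (hMne ((3:ℂ)) (by norm_num) 0 2 0) ?_; linear_combination (((9)/(2))*s1*a + (9)*s1*a*(ρ:ℂ)^2 + ((9)/(2))*s1*a*(ρ:ℂ)^4) * hI + ((3)*s1*Complex.I + (3)*s1*(ρ:ℂ)^2*Complex.I) * hs3x + ((3)*Complex.I + (3)*(ρ:ℂ)^2*Complex.I) * hs4x + ((3)*s1*Complex.I^2 + (6)*s1*(ρ:ℂ)^2*Complex.I^2 + (3)*s1*(ρ:ℂ)^4*Complex.I^2) * ht1 + ((-9) + (-18)*(ρ:ℂ)^2 + (-9)*(ρ:ℂ)^4) * ht2))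
      | ((refine scale_cancel (hMne ((3:ℂ)) (by norm_num) 0 2 0) ?_; linear_combination ((-3)*s1 + (-3)*s1*(ρ:ℂ)^2) * hs3x + ((-3) + (-3)*(ρ:ℂ)^2) * hs4x + ((-3)*s1*Complex.I + (-6)*s1*(ρ:ℂ)^2*Complex.I + (-3)*s1*(ρ:ℂ)^4*Complex.I) * ht1 + ((-9)*Complex.I + (-18)*(ρ:ℂ)^2*Complex.I + (-9)*(ρ:ℂ)^4*Complex.I) * ht2))
      | (ring1)
      | ((refine scale_cancel (hMne ((3:ℂ)) (by norm_num) 0 2 0) ?_; linear_combination (((-9)/(2))*s1*a*(ρ:ℂ) + (-9)*s1*a*(ρ:ℂ)^3 + ((-9)/(2))*s1*a*(ρ:ℂ)^5) * hI + ((-3)*s1*(ρ:ℂ)^3*Complex.I + (-3)*s1*(ρ:ℂ)^5*Complex.I) * hs3x + ((-3)*(ρ:ℂ)^3*Complex.I + (-3)*(ρ:ℂ)^5*Complex.I) * hs4x + ((-3)*s1*(ρ:ℂ)*Complex.I^2 + (-6)*s1*(ρ:ℂ)^3*Complex.I^2 + (-3)*s1*(ρ:ℂ)^5*Complex.I^2)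 * ht1 + ((9)*(ρ:ℂ) + (18)*(ρ:ℂ)^3 + (9)*(ρ:ℂ)^5) * ht2))
      | ((refine scale_cancel (hMne ((3:ℂ)) (by norm_num) 0 2 0) ?_; linear_combination ((3)*s1*(ρ:ℂ)^3 + (3)*s1*(ρ:ℂ)^5) * hs3x + ((3)*(ρ:ℂ)^3 + (3)*(ρ:ℂ)^5) * hs4x + ((3)*s1*(ρ:ℂ)*Complex.I + (6)*s1*(ρ:ℂ)^3*Complex.I + (3)*s1*(ρ:ℂ)^5*Complex.I) * ht1 + ((9)*(ρ:ℂ)*Complex.I + (18)*(ρ:ℂ)^3*Complex.I + (9)*(ρ:ℂ)^5*Complex.I) * ht2))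
  have hb14 : ⁅X1, X4⁆ = 0 := by
    simp only [hT, hX1, hX2, hX3, hX4, hX5, hv0, hv1, hv2, hv3, hv4, hv5, lie_add, add_lie, lie_sub, sub_lie, lie_smul, smul_lie, lie_self, hl01, hl02, hl03, hl04, hl05, hl12, hl13, hl14, hl15, hl23, hl24, hl25, hl34, hl35, hl45, hr01, hr02, hr03, hr04, hr05, hr12, hr13, hr14, hr15, hr23, hr24, hr25, hr34, hr35, hr45, smul_zero, lie_zero, zero_lie, add_zero, zero_add, smul_neg, neg_zero]
    try match_scalars
    all_goals first
      | (ring1)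
      | ((refine scale_cancel (hMne ((3:ℂ)) (by norm_num) 0 1 0) ?_; linear_combination ((5)*s1^2*a*Complex.I) * hI + ((1)*s1 + (1)*s1*Complex.I^2) * hs4x))
      | ((refine scale_cancel (hMne ((3:ℂ)) (by norm_num) 0 1 0) ?_; linear_combination ((5)*s1^2*a*(ρ:ℂ)^4*Complex.I) * hI + ((1)*s1*(ρ:ℂ)^4 + (1)*s1*(ρ:ℂ)^4*Complex.I^2) * hs4x))
  have hb15 : ⁅X1, X5⁆ = (6 : ℂ) • T + (-a) • X3 := by
    simp only [hT, hX1, hX2, hX3, hX4, hX5, hv0, hv1, hv2, hv3, hv4, hv5, lie_add, add_lie, lie_sub, sub_lie, lie_smul, smul_lie, lie_self, hl01, hl02, hl03, hl04, hl05, hl12, hl13, hl14, hl15, hl23, hl24, hl25, hl34, hl35, hl45, hr01, hr02, hr03, hr04, hr05, hr12, hr13, hr14, hr15, hr23, hr24, hr25, hr34, hr35, hr45, smul_zero, lie_zero, zero_lie, add_zero, zero_add, smul_neg, neg_zero]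
    try match_scalars
    all_goals first
      | (ring1)
      | ((refine scale_cancel (hMne ((18:ℂ)) (by norm_num) 2 4 1) ?_; linear_combination ((-150)*s1^2*a^2*Complex.I + ((3200)/(3))*s1^2*a^2*(ρ:ℂ)^2*Complex.I + ((7300)/(3))*s1^2*a^2*(ρ:ℂ)^4*Complex.I + ((3200)/(3))*s1^2*a^2*(ρ:ℂ)^6*Complex.I + (-150)*s1^2*a^2*(ρ:ℂ)^8*Complex.I) * hI + ((27)*s1^2*Complex.I + (-192)*s1^2*(ρ:ℂ)^2*Complex.I + (-438)*s1^2*(ρ:ℂ)^4*Complex.I + (-192)*s1^2*(ρ:ℂ)^6*Complex.I + (27)*s1^2*(ρ:ℂ)^8*Complex.I) * hkey + ((18)*s1^2*a + (-110)*s1^2*a*(ρ:ℂ)^2 + (-420)*s1^2*a*(ρ:ℂ)^4 + (-420)*s1^2*a*(ρ:ℂ)^6 + (-110)*s1^2*a*(ρ:ℂ)^8 + (18)*s1^2*a*(ρ:ℂ)^10) * hs3x + ((6)*s1^2 + (-6)*s1^2*Complex.I^2 + ((-128)/(3))*s1^2*(ρ:ℂ)^2 + ((128)/(3))*s1^2*(ρ:ℂ)^2*Complex.I^2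 + ((-292)/(3))*s1^2*(ρ:ℂ)^4 + ((292)/(3))*s1^2*(ρ:ℂ)^4*Complex.I^2 + ((-128)/(3))*s1^2*(ρ:ℂ)^6 + ((128)/(3))*s1^2*(ρ:ℂ)^6*Complex.I^2 + (6)*s1^2*(ρ:ℂ)^8 + (-6)*s1^2*(ρ:ℂ)^8*Complex.I^2) * hs5x + ((18)*s1^2*a*Complex.I + (-92)*s1^2*a*(ρ:ℂ)^2*Complex.I + (-530)*s1^2*a*(ρ:ℂ)^4*Complex.I + (-840)*s1^2*a*(ρ:ℂ)^6*Complex.I + (-530)*s1^2*a*(ρ:ℂ)^8*Complex.I + (-92)*s1^2*a*(ρ:ℂ)^10*Complex.I + (18)*s1^2*a*(ρ:ℂ)^12*Complex.I) * ht1 + ((-6)*s1^2*Complex.I + ((110)/(3))*s1^2*(ρ:ℂ)^2*Complex.I + (140)*s1^2*(ρ:ℂ)^4*Complex.I + (140)*s1^2*(ρ:ℂ)^6*Complex.I + ((110)/(3))*s1^2*(ρ:ℂ)^8*Complex.I + (-6)*s1^2*(ρ:ℂ)^10*Complex.I) * ht3x))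
      | ((refine scale_cancel (hMne ((18:ℂ)) (by norm_num) 2 4 1) ?_; linear_combination ((-150)*s1^2*a^2*(ρ:ℂ)^4*Complex.I + ((3200)/(3))*s1^2*a^2*(ρ:ℂ)^6*Complex.I + ((7300)/(3))*s1^2*a^2*(ρ:ℂ)^8*Complex.I + ((3200)/(3))*s1^2*a^2*(ρ:ℂ)^10*Complex.I + (-150)*s1^2*a^2*(ρ:ℂ)^12*Complex.I) * hI + ((27)*s1^2*Complex.I + (-192)*s1^2*(ρ:ℂ)^2*Complex.I + (-438)*s1^2*(ρ:ℂ)^4*Complex.I + (-192)*s1^2*(ρ:ℂ)^6*Complex.I + (27)*s1^2*(ρ:ℂ)^8*Complex.I) * hkey + ((18)*s1^2*a*(ρ:ℂ)^2 + (-110)*s1^2*a*(ρ:ℂ)^4 + (-420)*s1^2*a*(ρ:ℂ)^6 + (-420)*s1^2*a*(ρ:ℂ)^8 + (-110)*s1^2*a*(ρ:ℂ)^10 + (18)*s1^2*a*(ρ:ℂ)^12) * hs3x + ((6)*s1^2*(ρ:ℂ)^4 + (-6)*s1^2*(ρ:ℂ)^4*Complex.I^2 + ((-128)/(3))*s1^2*(ρ:ℂ)^6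 + ((128)/(3))*s1^2*(ρ:ℂ)^6*Complex.I^2 + ((-292)/(3))*s1^2*(ρ:ℂ)^8 + ((292)/(3))*s1^2*(ρ:ℂ)^8*Complex.I^2 + ((-128)/(3))*s1^2*(ρ:ℂ)^10 + ((128)/(3))*s1^2*(ρ:ℂ)^10*Complex.I^2 + (6)*s1^2*(ρ:ℂ)^12 + (-6)*s1^2*(ρ:ℂ)^12*Complex.I^2) * hs5x + ((18)*s1^2*a*Complex.I + (-92)*s1^2*a*(ρ:ℂ)^2*Complex.I + (-530)*s1^2*a*(ρ:ℂ)^4*Complex.I + (-840)*s1^2*a*(ρ:ℂ)^6*Complex.I + (-530)*s1^2*a*(ρ:ℂ)^8*Complex.I + (-92)*s1^2*a*(ρ:ℂ)^10*Complex.I + (18)*s1^2*a*(ρ:ℂ)^12*Complex.I) * ht1 + ((-6)*s1^2*(ρ:ℂ)^2*Complex.I + ((110)/(3))*s1^2*(ρ:ℂ)^4*Complex.I + (140)*s1^2*(ρ:ℂ)^6*Complex.I + (140)*s1^2*(ρ:ℂ)^8*Complex.I + ((110)/(3))*s1^2*(ρ:ℂ)^10*Complex.I + (-6)*s1^2*(ρ:ℂ)^12*Complex.I)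 * ht3x))
  have hb23 : ⁅X2, X3⁆ = (-(2*a)) • X2 + (-3 : ℂ) • X5 := by
    simp only [hT, hX1, hX2, hX3, hX4, hX5, hv0, hv1, hv2, hv3, hv4, hv5, lie_add, add_lie, lie_sub, sub_lie, lie_smul, smul_lie, lie_self, hl01, hl02, hl03, hl04, hl05, hl12, hl13, hl14, hl15, hl23, hl24, hl25, hl34, hl35, hl45, hr01, hr02, hr03, hr04, hr05, hr12, hr13, hr14, hr15, hr23, hr24, hr25, hr34, hr35, hr45, smul_zero, lie_zero, zero_lie, add_zero, zero_add, smul_neg, neg_zero]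
    try match_scalars
    all_goals first
      | ((refine scale_cancel (hMne ((18:ℂ)) (by norm_num) 3 5 0) ?_; linear_combination ((135)*s1^2*a^2 + (540)*s1^2*a^2*(ρ:ℂ)^2 + (810)*s1^2*a^2*(ρ:ℂ)^4 + (540)*s1^2*a^2*(ρ:ℂ)^6 + (135)*s1^2*a^2*(ρ:ℂ)^8) * hI + ((36)*s1^2*a + (144)*s1^2*a*(ρ:ℂ)^2 + (216)*s1^2*a*(ρ:ℂ)^4 + (144)*s1^2*a*(ρ:ℂ)^6 + (36)*s1^2*a*(ρ:ℂ)^8 + (-18)*s1^2*t1*Complex.I^2 + (-72)*s1^2*t1*(ρ:ℂ)^2*Complex.I^2 + (-108)*s1^2*t1*(ρ:ℂ)^4*Complex.I^2 + (-72)*s1^2*t1*(ρ:ℂ)^6*Complex.I^2 + (-18)*s1^2*t1*(ρ:ℂ)^8*Complex.I^2 + (-18)*s1^2*s3*Complex.I + (-72)*s1^2*s3*(ρ:ℂ)^2*Complex.I + (-108)*s1^2*s3*(ρ:ℂ)^4*Complex.I + (-72)*s1^2*s3*(ρ:ℂ)^6*Complex.I + (-18)*s1^2*s3*(ρ:ℂ)^8*Complex.I)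 * hs2x + ((90)*s1^2*a*Complex.I + (270)*s1^2*a*(ρ:ℂ)^2*Complex.I + (270)*s1^2*a*(ρ:ℂ)^4*Complex.I + (90)*s1^2*a*(ρ:ℂ)^6*Complex.I) * hs3x + ((18)*s1^2*Complex.I + (54)*s1^2*(ρ:ℂ)^2*Complex.I + (54)*s1^2*(ρ:ℂ)^4*Complex.I + (18)*s1^2*(ρ:ℂ)^6*Complex.I) * hs5x + ((90)*s1^2*a*Complex.I^2 + (360)*s1^2*a*(ρ:ℂ)^2*Complex.I^2 + (540)*s1^2*a*(ρ:ℂ)^4*Complex.I^2 + (360)*s1^2*a*(ρ:ℂ)^6*Complex.I^2 + (90)*s1^2*a*(ρ:ℂ)^8*Complex.I^2) * ht1 + ((9)*s1^2 + (36)*s1^2*(ρ:ℂ)^2 + (54)*s1^2*(ρ:ℂ)^4 + (36)*s1^2*(ρ:ℂ)^6 + (9)*s1^2*(ρ:ℂ)^8) * ht3x))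
      | ((refine scale_cancel (hMne ((18:ℂ)) (by norm_num) 3 5 0) ?_; linear_combination ((-36)*s1^2*a*Complex.I + (-144)*s1^2*a*(ρ:ℂ)^2*Complex.I + (-216)*s1^2*a*(ρ:ℂ)^4*Complex.I + (-144)*s1^2*a*(ρ:ℂ)^6*Complex.I + (-36)*s1^2*a*(ρ:ℂ)^8*Complex.I + (-18)*s1^2*t1*Complex.I + (-72)*s1^2*t1*(ρ:ℂ)^2*Complex.I + (-108)*s1^2*t1*(ρ:ℂ)^4*Complex.I + (-72)*s1^2*t1*(ρ:ℂ)^6*Complex.I + (-18)*s1^2*t1*(ρ:ℂ)^8*Complex.I + (-18)*s1^2*s3 + (-72)*s1^2*s3*(ρ:ℂ)^2 + (-108)*s1^2*s3*(ρ:ℂ)^4 + (-72)*s1^2*s3*(ρ:ℂ)^6 + (-18)*s1^2*s3*(ρ:ℂ)^8) * hs2x + ((90)*s1^2*a + (270)*s1^2*a*(ρ:ℂ)^2 + (270)*s1^2*a*(ρ:ℂ)^4 + (90)*s1^2*a*(ρ:ℂ)^6) * hs3x + ((18)*s1^2 + (54)*s1^2*(ρ:ℂ)^2 + (54)*s1^2*(ρ:ℂ)^4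 + (18)*s1^2*(ρ:ℂ)^6) * hs5x + ((90)*s1^2*a*Complex.I + (360)*s1^2*a*(ρ:ℂ)^2*Complex.I + (540)*s1^2*a*(ρ:ℂ)^4*Complex.I + (360)*s1^2*a*(ρ:ℂ)^6*Complex.I + (90)*s1^2*a*(ρ:ℂ)^8*Complex.I) * ht1 + ((-9)*s1^2*Complex.I + (-36)*s1^2*(ρ:ℂ)^2*Complex.I + (-54)*s1^2*(ρ:ℂ)^4*Complex.I + (-36)*s1^2*(ρ:ℂ)^6*Complex.I + (-9)*s1^2*(ρ:ℂ)^8*Complex.I) * ht3x))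
      | (ring1)
      | ((refine scale_cancel (hMne ((18:ℂ)) (by norm_num) 3 5 0) ?_; linear_combination ((-135)*s1^2*a^2*(ρ:ℂ) + (-540)*s1^2*a^2*(ρ:ℂ)^3 + (-810)*s1^2*a^2*(ρ:ℂ)^5 + (-540)*s1^2*a^2*(ρ:ℂ)^7 + (-135)*s1^2*a^2*(ρ:ℂ)^9) * hI + ((-36)*s1^2*a*(ρ:ℂ) + (-144)*s1^2*a*(ρ:ℂ)^3 + (-216)*s1^2*a*(ρ:ℂ)^5 + (-144)*s1^2*a*(ρ:ℂ)^7 + (-36)*s1^2*a*(ρ:ℂ)^9 + (18)*s1^2*t1*(ρ:ℂ)*Complex.I^2 + (72)*s1^2*t1*(ρ:ℂ)^3*Complex.I^2 + (108)*s1^2*t1*(ρ:ℂ)^5*Complex.I^2 + (72)*s1^2*t1*(ρ:ℂ)^7*Complex.I^2 + (18)*s1^2*t1*(ρ:ℂ)^9*Complex.I^2 + (18)*s1^2*s3*(ρ:ℂ)^3*Complex.I + (72)*s1^2*s3*(ρ:ℂ)^5*Complex.I + (108)*s1^2*s3*(ρ:ℂ)^7*Complex.I + (72)*s1^2*s3*(ρ:ℂ)^9*Complex.I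 + (18)*s1^2*s3*(ρ:ℂ)^11*Complex.I) * hs2x + ((-90)*s1^2*a*(ρ:ℂ)^3*Complex.I + (-270)*s1^2*a*(ρ:ℂ)^5*Complex.I + (-270)*s1^2*a*(ρ:ℂ)^7*Complex.I + (-90)*s1^2*a*(ρ:ℂ)^9*Complex.I) * hs3x + ((-18)*s1^2*(ρ:ℂ)^3*Complex.I + (-54)*s1^2*(ρ:ℂ)^5*Complex.I + (-54)*s1^2*(ρ:ℂ)^7*Complex.I + (-18)*s1^2*(ρ:ℂ)^9*Complex.I) * hs5x + ((-90)*s1^2*a*(ρ:ℂ)*Complex.I^2 + (-360)*s1^2*a*(ρ:ℂ)^3*Complex.I^2 + (-540)*s1^2*a*(ρ:ℂ)^5*Complex.I^2 + (-360)*s1^2*a*(ρ:ℂ)^7*Complex.I^2 + (-90)*s1^2*a*(ρ:ℂ)^9*Complex.I^2) * ht1 + ((-9)*s1^2*(ρ:ℂ) + (-36)*s1^2*(ρ:ℂ)^3 + (-54)*s1^2*(ρ:ℂ)^5 + (-36)*s1^2*(ρ:ℂ)^7 + (-9)*s1^2*(ρ:ℂ)^9) * ht3x))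
      | ((refine scale_cancel (hMne ((18:ℂ)) (by norm_num) 3 5 0) ?_; linear_combination ((36)*s1^2*a*(ρ:ℂ)*Complex.I + (144)*s1^2*a*(ρ:ℂ)^3*Complex.I + (216)*s1^2*a*(ρ:ℂ)^5*Complex.I + (144)*s1^2*a*(ρ:ℂ)^7*Complex.I + (36)*s1^2*a*(ρ:ℂ)^9*Complex.I + (18)*s1^2*t1*(ρ:ℂ)*Complex.I + (72)*s1^2*t1*(ρ:ℂ)^3*Complex.I + (108)*s1^2*t1*(ρ:ℂ)^5*Complex.I + (72)*s1^2*t1*(ρ:ℂ)^7*Complex.I + (18)*s1^2*t1*(ρ:ℂ)^9*Complex.I + (18)*s1^2*s3*(ρ:ℂ)^3 + (72)*s1^2*s3*(ρ:ℂ)^5 + (108)*s1^2*s3*(ρ:ℂ)^7 + (72)*s1^2*s3*(ρ:ℂ)^9 + (18)*s1^2*s3*(ρ:ℂ)^11) * hs2x + ((-90)*s1^2*a*(ρ:ℂ)^3 + (-270)*s1^2*a*(ρ:ℂ)^5 + (-270)*s1^2*a*(ρ:ℂ)^7 + (-90)*s1^2*a*(ρ:ℂ)^9) * hs3x + ((-18)*s1^2*(ρ:ℂ)^3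 + (-54)*s1^2*(ρ:ℂ)^5 + (-54)*s1^2*(ρ:ℂ)^7 + (-18)*s1^2*(ρ:ℂ)^9) * hs5x + ((-90)*s1^2*a*(ρ:ℂ)*Complex.I + (-360)*s1^2*a*(ρ:ℂ)^3*Complex.I + (-540)*s1^2*a*(ρ:ℂ)^5*Complex.I + (-360)*s1^2*a*(ρ:ℂ)^7*Complex.I + (-90)*s1^2*a*(ρ:ℂ)^9*Complex.I) * ht1 + ((9)*s1^2*(ρ:ℂ)*Complex.I + (36)*s1^2*(ρ:ℂ)^3*Complex.I + (54)*s1^2*(ρ:ℂ)^5*Complex.I + (36)*s1^2*(ρ:ℂ)^7*Complex.I + (9)*s1^2*(ρ:ℂ)^9*Complex.I) * ht3x))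
  have hb24 : ⁅X2, X4⁆ = (-6 : ℂ) • T + (a) • X3 := by
    simp only [hT, hX1, hX2, hX3, hX4, hX5, hv0, hv1, hv2, hv3, hv4, hv5, lie_add, add_lie, lie_sub, sub_lie, lie_smul, smul_lie, lie_self, hl01, hl02, hl03, hl04, hl05, hl12, hl13, hl14, hl15, hl23, hl24, hl25, hl34, hl35, hl45, hr01, hr02, hr03, hr04, hr05, hr12, hr13, hr14, hr15, hr23, hr24, hr25, hr34, hr35, hr45, smul_zero, lie_zero, zero_lie, add_zero, zero_add, smul_neg, neg_zero]
    try match_scalars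
    all_goals first
      | (ring1)
      | ((refine scale_cancel (hMne ((3:ℂ)) (by norm_num) 1 3 1) ?_; linear_combination ((25)*s1*a^2*Complex.I + ((-1825)/(9))*s1*a^2*(ρ:ℂ)^2*Complex.I + ((-1825)/(9))*s1*a^2*(ρ:ℂ)^4*Complex.I + (25)*s1*a^2*(ρ:ℂ)^6*Complex.I) * hI + (((-9)/(2))*s1*Complex.I + ((73)/(2))*s1*(ρ:ℂ)^2*Complex.I + ((73)/(2))*s1*(ρ:ℂ)^4*Complex.I + ((-9)/(2))*s1*(ρ:ℂ)^6*Complex.I) * hkey + ((6)*t2*Complex.I + ((-128)/(3))*t2*(ρ:ℂ)^2*Complex.I + ((-292)/(3))*t2*(ρ:ℂ)^4*Complex.I + ((-128)/(3))*t2*(ρ:ℂ)^6*Complex.I + (6)*t2*(ρ:ℂ)^8*Complex.I + (3)*s4 + (-3)*s4*Complex.I^2 + ((-64)/(3))*s4*(ρ:ℂ)^2 + ((64)/(3))*s4*(ρ:ℂ)^2*Complex.I^2 + ((-146)/(3))*s4*(ρ:ℂ)^4 + ((146)/(3))*s4*(ρ:ℂ)^4*Complex.I^2 + ((-64)/(3))*s4*(ρ:ℂ)^6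 + ((64)/(3))*s4*(ρ:ℂ)^6*Complex.I^2 + (3)*s4*(ρ:ℂ)^8 + (-3)*s4*(ρ:ℂ)^8*Complex.I^2) * hs2x + ((-3)*s1*a + ((64)/(3))*s1*a*(ρ:ℂ)^2 + ((146)/(3))*s1*a*(ρ:ℂ)^4 + ((64)/(3))*s1*a*(ρ:ℂ)^6 + (-3)*s1*a*(ρ:ℂ)^8) * hs3x + ((-5)*a + (5)*a*Complex.I^2 + ((365)/(9))*a*(ρ:ℂ)^2 + ((-365)/(9))*a*(ρ:ℂ)^2*Complex.I^2 + ((365)/(9))*a*(ρ:ℂ)^4 + ((-365)/(9))*a*(ρ:ℂ)^4*Complex.I^2 + (-5)*a*(ρ:ℂ)^6 + (5)*a*(ρ:ℂ)^6*Complex.I^2) * hs4x + ((-3)*s1*a*Complex.I + ((55)/(3))*s1*a*(ρ:ℂ)^2*Complex.I + (70)*s1*a*(ρ:ℂ)^4*Complex.I + (70)*s1*a*(ρ:ℂ)^6*Complex.I + ((55)/(3))*s1*a*(ρ:ℂ)^8*Complex.I + (-3)*s1*a*(ρ:ℂ)^10*Complex.I) * ht1 + ((-30)*a*Complex.I + ((640)/(3))*a*(ρ:ℂ)^2*Complex.I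 + ((1460)/(3))*a*(ρ:ℂ)^4*Complex.I + ((640)/(3))*a*(ρ:ℂ)^6*Complex.I + (-30)*a*(ρ:ℂ)^8*Complex.I) * ht2))
      | ((refine scale_cancel (hMne ((3:ℂ)) (by norm_num) 1 3 1) ?_; linear_combination ((25)*s1*a^2*(ρ:ℂ)^4*Complex.I + ((-1825)/(9))*s1*a^2*(ρ:ℂ)^6*Complex.I + ((-1825)/(9))*s1*a^2*(ρ:ℂ)^8*Complex.I + (25)*s1*a^2*(ρ:ℂ)^10*Complex.I) * hI + (((-9)/(2))*s1*Complex.I + ((73)/(2))*s1*(ρ:ℂ)^2*Complex.I + ((73)/(2))*s1*(ρ:ℂ)^4*Complex.I + ((-9)/(2))*s1*(ρ:ℂ)^6*Complex.I) * hkey + ((6)*t2*(ρ:ℂ)^2*Complex.I + ((-128)/(3))*t2*(ρ:ℂ)^4*Complex.I + ((-292)/(3))*t2*(ρ:ℂ)^6*Complex.I + ((-128)/(3))*t2*(ρ:ℂ)^8*Complex.I + (6)*t2*(ρ:ℂ)^10*Complex.I + (3)*s4*(ρ:ℂ)^4 + (-3)*s4*(ρ:ℂ)^4*Complex.I^2 +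 ((-64)/(3))*s4*(ρ:ℂ)^6 + ((64)/(3))*s4*(ρ:ℂ)^6*Complex.I^2 + ((-146)/(3))*s4*(ρ:ℂ)^8 + ((146)/(3))*s4*(ρ:ℂ)^8*Complex.I^2 + ((-64)/(3))*s4*(ρ:ℂ)^10 + ((64)/(3))*s4*(ρ:ℂ)^10*Complex.I^2 + (3)*s4*(ρ:ℂ)^12 + (-3)*s4*(ρ:ℂ)^12*Complex.I^2) * hs2x + ((-3)*s1*a*(ρ:ℂ)^2 + ((64)/(3))*s1*a*(ρ:ℂ)^4 + ((146)/(3))*s1*a*(ρ:ℂ)^6 + ((64)/(3))*s1*a*(ρ:ℂ)^8 + (-3)*s1*a*(ρ:ℂ)^10) * hs3x + ((-5)*a*(ρ:ℂ)^4 + (5)*a*(ρ:ℂ)^4*Complex.I^2 + ((365)/(9))*a*(ρ:ℂ)^6 + ((-365)/(9))*a*(ρ:ℂ)^6*Complex.I^2 + ((365)/(9))*a*(ρ:ℂ)^8 + ((-365)/(9))*a*(ρ:ℂ)^8*Complex.I^2 + (-5)*a*(ρ:ℂ)^10 + (5)*a*(ρ:ℂ)^10*Complex.I^2) * hs4x +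 ((-3)*s1*a*Complex.I + ((55)/(3))*s1*a*(ρ:ℂ)^2*Complex.I + (70)*s1*a*(ρ:ℂ)^4*Complex.I + (70)*s1*a*(ρ:ℂ)^6*Complex.I + ((55)/(3))*s1*a*(ρ:ℂ)^8*Complex.I + (-3)*s1*a*(ρ:ℂ)^10*Complex.I) * ht1 + ((-30)*a*(ρ:ℂ)^2*Complex.I + ((640)/(3))*a*(ρ:ℂ)^4*Complex.I + ((1460)/(3))*a*(ρ:ℂ)^6*Complex.I + ((640)/(3))*a*(ρ:ℂ)^8*Complex.I + (-30)*a*(ρ:ℂ)^10*Complex.I) * ht2))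
  have hb25 : ⁅X2, X5⁆ = 0 := by
    simp only [hT, hX1, hX2, hX3, hX4, hX5, hv0, hv1, hv2, hv3, hv4, hv5, lie_add, add_lie, lie_sub, sub_lie, lie_smul, smul_lie, lie_self, hl01, hl02, hl03, hl04, hl05, hl12, hl13, hl14, hl15, hl23, hl24, hl25, hl34, hl35, hl45, hr01, hr02, hr03, hr04, hr05, hr12, hr13, hr14, hr15, hr23, hr24, hr25, hr34, hr35, hr45, smul_zero, lie_zero, zero_lie, add_zero, zero_add, smul_neg, neg_zero]
    try match_scalars
    all_goals first
      | (ring1)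
      | ((refine scale_cancel (hMne ((3:ℂ)) (by norm_num) 2 3 0) ?_; linear_combination ((-125)*a^3*Complex.I) * hI + ((3)*s1*s5 + (3)*s1*s5*Complex.I^2 + (6)*s1*s5*(ρ:ℂ)^2 + (6)*s1*s5*(ρ:ℂ)^2*Complex.I^2 + (3)*s1*s5*(ρ:ℂ)^4 + (3)*s1*s5*(ρ:ℂ)^4*Complex.I^2) * hs2x + ((-5)*a + (-5)*a*Complex.I^2) * hs5x))
      | ((refine scale_cancel (hMne ((3:ℂ)) (by norm_num) 2 3 0) ?_; linear_combination ((-125)*a^3*(ρ:ℂ)^4*Complex.I) * hI + ((3)*s1*s5*(ρ:ℂ)^4 + (3)*s1*s5*(ρ:ℂ)^4*Complex.I^2 + (6)*s1*s5*(ρ:ℂ)^6 + (6)*s1*s5*(ρ:ℂ)^6*Complex.I^2 + (3)*s1*s5*(ρ:ℂ)^8 + (3)*s1*s5*(ρ:ℂ)^8*Complex.I^2) * hs2x + ((-5)*a*(ρ:ℂ)^4 + (-5)*a*(ρ:ℂ)^4*Complex.I^2) * hs5x))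
  have hb34 : ⁅X3, X4⁆ = (-(a^2+3)) • X1 := by
    simp only [hT, hX1, hX2, hX3, hX4, hX5, hv0, hv1, hv2, hv3, hv4, hv5, lie_add, add_lie, lie_sub, sub_lie, lie_smul, smul_lie, lie_self, hl01, hl02, hl03, hl04, hl05, hl12, hl13, hl14, hl15, hl23, hl24, hl25, hl34, hl35, hl45, hr01, hr02, hr03, hr04, hr05, hr12, hr13, hr14, hr15, hr23, hr24, hr25, hr34, hr35, hr45, smul_zero, lie_zero, zero_lie, add_zero, zero_add, smul_neg, neg_zero]
    try match_scalars
    all_goals first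
      | ((refine scale_cancel (hMne ((3:ℂ)) (by norm_num) 0 2 1) ?_; linear_combination (((21)/(4))*s1*a^2 + ((-187)/(3))*s1*a^2*(ρ:ℂ)^2 + ((2567)/(18))*s1*a^2*(ρ:ℂ)^4 + ((-187)/(3))*s1*a^2*(ρ:ℂ)^6 + ((21)/(4))*s1*a^2*(ρ:ℂ)^8) * hI + (((-9)/(4))*s1 + ((41)/(2))*s1*(ρ:ℂ)^2 + ((-9)/(4))*s1*(ρ:ℂ)^4) * hkey + ((-3)*t2*Complex.I + ((73)/(3))*t2*(ρ:ℂ)^2*Complex.I + ((73)/(3))*t2*(ρ:ℂ)^4*Complex.I + (-3)*t2*(ρ:ℂ)^6*Complex.I + (-3)*s4 + ((73)/(3))*s4*(ρ:ℂ)^2 + ((73)/(3))*s4*(ρ:ℂ)^4 + (-3)*s4*(ρ:ℂ)^6) * hs3x + ((5)*a*Complex.I + ((-410)/(9))*a*(ρ:ℂ)^2*Complex.I + (5)*a*(ρ:ℂ)^4*Complex.I + (-1)*t1*Complex.I + ((73)/(9))*t1*(ρ:ℂ)^2*Complex.I + ((73)/(9))*t1*(ρ:ℂ)^4*Complex.I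 + (-1)*t1*(ρ:ℂ)^6*Complex.I) * hs4x + ((-3)*t2*Complex.I^2 + ((64)/(3))*t2*(ρ:ℂ)^2*Complex.I^2 + ((146)/(3))*t2*(ρ:ℂ)^4*Complex.I^2 + ((64)/(3))*t2*(ρ:ℂ)^6*Complex.I^2 + (-3)*t2*(ρ:ℂ)^8*Complex.I^2 + (-5)*s1*a*Complex.I^2 + ((365)/(9))*s1*a*(ρ:ℂ)^2*Complex.I^2 + ((365)/(9))*s1*a*(ρ:ℂ)^4*Complex.I^2 + (-5)*s1*a*(ρ:ℂ)^6*Complex.I^2) * ht1 + (((21)/(2))*a*Complex.I^2 + ((-269)/(3))*a*(ρ:ℂ)^2*Complex.I^2 + ((-146)/(3))*a*(ρ:ℂ)^4*Complex.I^2 + (47)*a*(ρ:ℂ)^6*Complex.I^2 + ((-9)/(2))*a*(ρ:ℂ)^8*Complex.I^2) * ht2))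
      | ((refine scale_cancel (hMne ((3:ℂ)) (by norm_num) 0 2 1) ?_; linear_combination (((35)/(2))*s1*a^2*Complex.I + ((-3005)/(18))*s1*a^2*(ρ:ℂ)^2*Complex.I + ((515)/(6))*s1*a^2*(ρ:ℂ)^4*Complex.I + ((-15)/(2))*s1*a^2*(ρ:ℂ)^6*Complex.I) * hI + (((-9)/(4))*s1*Complex.I + ((41)/(2))*s1*(ρ:ℂ)^2*Complex.I + ((-9)/(4))*s1*(ρ:ℂ)^4*Complex.I) * hkey + ((3)*t2 + ((-73)/(3))*t2*(ρ:ℂ)^2 + ((-73)/(3))*t2*(ρ:ℂ)^4 + (3)*t2*(ρ:ℂ)^6 + (-3)*s4*Complex.I + ((73)/(3))*s4*(ρ:ℂ)^2*Complex.I + ((73)/(3))*s4*(ρ:ℂ)^4*Complex.I + (-3)*s4*(ρ:ℂ)^6*Complex.I) * hs3x + ((5)*a*Complex.I^2 + ((-410)/(9))*a*(ρ:ℂ)^2*Complex.I^2 + (5)*a*(ρ:ℂ)^4*Complex.I^2 + (-1)*t1*Complex.I^2 + ((73)/(9))*t1*(ρ:ℂ)^2*Complex.I^2 + ((73)/(9))*t1*(ρ:ℂ)^4*Complex.I^2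 + (-1)*t1*(ρ:ℂ)^6*Complex.I^2) * hs4x + ((3)*t2*Complex.I + ((-64)/(3))*t2*(ρ:ℂ)^2*Complex.I + ((-146)/(3))*t2*(ρ:ℂ)^4*Complex.I + ((-64)/(3))*t2*(ρ:ℂ)^6*Complex.I + (3)*t2*(ρ:ℂ)^8*Complex.I + (-5)*s1*a*Complex.I^3 + ((365)/(9))*s1*a*(ρ:ℂ)^2*Complex.I^3 + ((365)/(9))*s1*a*(ρ:ℂ)^4*Complex.I^3 + (-5)*s1*a*(ρ:ℂ)^6*Complex.I^3) * ht1 + (((-21)/(2))*a*Complex.I + ((269)/(3))*a*(ρ:ℂ)^2*Complex.I + ((146)/(3))*a*(ρ:ℂ)^4*Complex.I + (-47)*a*(ρ:ℂ)^6*Complex.I + ((9)/(2))*a*(ρ:ℂ)^8*Complex.I) * ht2))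
      | (ring1)
      | ((refine scale_cancel (hMne ((3:ℂ)) (by norm_num) 0 2 1) ?_; linear_combination (((-21)/(4))*s1*a^2*(ρ:ℂ) + ((187)/(3))*s1*a^2*(ρ:ℂ)^3 + ((-2567)/(18))*s1*a^2*(ρ:ℂ)^5 + ((187)/(3))*s1*a^2*(ρ:ℂ)^7 + ((-21)/(4))*s1*a^2*(ρ:ℂ)^9) * hI + (((9)/(4))*s1*(ρ:ℂ) + ((-41)/(2))*s1*(ρ:ℂ)^3 + ((9)/(4))*s1*(ρ:ℂ)^5) * hkey + ((3)*t2*(ρ:ℂ)^3*Complex.I + ((-73)/(3))*t2*(ρ:ℂ)^5*Complex.I + ((-73)/(3))*t2*(ρ:ℂ)^7*Complex.I + (3)*t2*(ρ:ℂ)^9*Complex.I + (3)*s4*(ρ:ℂ)^5 + ((-73)/(3))*s4*(ρ:ℂ)^7 + ((-73)/(3))*s4*(ρ:ℂ)^9 + (3)*s4*(ρ:ℂ)^11) * hs3x + ((-5)*a*(ρ:ℂ)^5*Complex.I + ((410)/(9))*a*(ρ:ℂ)^7*Complex.I + (-5)*a*(ρ:ℂ)^9*Complex.I + (1)*t1*(ρ:ℂ)^3*Complex.I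 + ((-73)/(9))*t1*(ρ:ℂ)^5*Complex.I + ((-73)/(9))*t1*(ρ:ℂ)^7*Complex.I + (1)*t1*(ρ:ℂ)^9*Complex.I) * hs4x + ((3)*t2*(ρ:ℂ)*Complex.I^2 + ((-64)/(3))*t2*(ρ:ℂ)^3*Complex.I^2 + ((-146)/(3))*t2*(ρ:ℂ)^5*Complex.I^2 + ((-64)/(3))*t2*(ρ:ℂ)^7*Complex.I^2 + (3)*t2*(ρ:ℂ)^9*Complex.I^2 + (5)*s1*a*(ρ:ℂ)^3*Complex.I^2 + ((-365)/(9))*s1*a*(ρ:ℂ)^5*Complex.I^2 + ((-365)/(9))*s1*a*(ρ:ℂ)^7*Complex.I^2 + (5)*s1*a*(ρ:ℂ)^9*Complex.I^2) * ht1 + (((9)/(2))*a*(ρ:ℂ)*Complex.I^2 + (-47)*a*(ρ:ℂ)^3*Complex.I^2 + ((146)/(3))*a*(ρ:ℂ)^5*Complex.I^2 + ((269)/(3))*a*(ρ:ℂ)^7*Complex.I^2 + ((-21)/(2))*a*(ρ:ℂ)^9*Complex.I^2) * ht2))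
      | ((refine scale_cancel (hMne ((3:ℂ)) (by norm_num) 0 2 1) ?_; linear_combination (((15)/(2))*s1*a^2*(ρ:ℂ)^3*Complex.I + ((-515)/(6))*s1*a^2*(ρ:ℂ)^5*Complex.I + ((3005)/(18))*s1*a^2*(ρ:ℂ)^7*Complex.I + ((-35)/(2))*s1*a^2*(ρ:ℂ)^9*Complex.I) * hI + (((9)/(4))*s1*(ρ:ℂ)*Complex.I + ((-41)/(2))*s1*(ρ:ℂ)^3*Complex.I + ((9)/(4))*s1*(ρ:ℂ)^5*Complex.I) * hkey + ((-3)*t2*(ρ:ℂ)^3 + ((73)/(3))*t2*(ρ:ℂ)^5 + ((73)/(3))*t2*(ρ:ℂ)^7 + (-3)*t2*(ρ:ℂ)^9 + (3)*s4*(ρ:ℂ)^5*Complex.I + ((-73)/(3))*s4*(ρ:ℂ)^7*Complex.I + ((-73)/(3))*s4*(ρ:ℂ)^9*Complex.I + (3)*s4*(ρ:ℂ)^11*Complex.I) * hs3x + ((-5)*a*(ρ:ℂ)^5*Complex.I^2 + ((410)/(9))*a*(ρ:ℂ)^7*Complex.I^2 + (-5)*a*(ρ:ℂ)^9*Complex.I^2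 + (1)*t1*(ρ:ℂ)^3*Complex.I^2 + ((-73)/(9))*t1*(ρ:ℂ)^5*Complex.I^2 + ((-73)/(9))*t1*(ρ:ℂ)^7*Complex.I^2 + (1)*t1*(ρ:ℂ)^9*Complex.I^2) * hs4x + ((-3)*t2*(ρ:ℂ)*Complex.I + ((64)/(3))*t2*(ρ:ℂ)^3*Complex.I + ((146)/(3))*t2*(ρ:ℂ)^5*Complex.I + ((64)/(3))*t2*(ρ:ℂ)^7*Complex.I + (-3)*t2*(ρ:ℂ)^9*Complex.I + (5)*s1*a*(ρ:ℂ)^3*Complex.I^3 + ((-365)/(9))*s1*a*(ρ:ℂ)^5*Complex.I^3 + ((-365)/(9))*s1*a*(ρ:ℂ)^7*Complex.I^3 + (5)*s1*a*(ρ:ℂ)^9*Complex.I^3) * ht1 + (((-9)/(2))*a*(ρ:ℂ)*Complex.I + (47)*a*(ρ:ℂ)^3*Complex.I + ((-146)/(3))*a*(ρ:ℂ)^5*Complex.I + ((-269)/(3))*a*(ρ:ℂ)^7*Complex.I + ((21)/(2))*a*(ρ:ℂ)^9*Complex.I) * ht2))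
  have hb35 : ⁅X3, X5⁆ = (a^2+3) • X2 := by
    simp only [hT, hX1, hX2, hX3, hX4, hX5, hv0, hv1, hv2, hv3, hv4, hv5, lie_add, add_lie, lie_sub, sub_lie, lie_smul, smul_lie, lie_self, hl01, hl02, hl03, hl04, hl05, hl12, hl13, hl14, hl15, hl23, hl24, hl25, hl34, hl35, hl45, hr01, hr02, hr03, hr04, hr05, hr12, hr13, hr14, hr15, hr23, hr24, hr25, hr34, hr35, hr45, smul_zero, lie_zero, zero_lie, add_zero, zero_add, smul_neg, neg_zero]
    try match_scalars
    all_goals first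
      | ((refine scale_cancel (hMne ((18:ℂ)) (by norm_num) 3 5 1) ?_; linear_combination (((315)/(2))*s1^2*a^3 + (-1555)*s1^2*a^3*(ρ:ℂ)^2 + ((4175)/(6))*s1^2*a^3*(ρ:ℂ)^4 + ((14450)/(3))*s1^2*a^3*(ρ:ℂ)^6 + ((4175)/(6))*s1^2*a^3*(ρ:ℂ)^8 + (-1555)*s1^2*a^3*(ρ:ℂ)^10 + ((315)/(2))*s1^2*a^3*(ρ:ℂ)^12) * hI + (((-135)/(2))*s1^2*a + (480)*s1^2*a*(ρ:ℂ)^2 + (1095)*s1^2*a*(ρ:ℂ)^4 + (480)*s1^2*a*(ρ:ℂ)^6 + ((-135)/(2))*s1^2*a*(ρ:ℂ)^8) * hkey + ((-54)*s1^2 + (276)*s1^2*(ρ:ℂ)^2 + (1590)*s1^2*(ρ:ℂ)^4 + (2520)*s1^2*(ρ:ℂ)^6 + (1590)*s1^2*(ρ:ℂ)^8 + (276)*s1^2*(ρ:ℂ)^10 + (-54)*s1^2*(ρ:ℂ)^12 + (-18)*s1^2*a^2 + (92)*s1^2*a^2*(ρ:ℂ)^2 + (530)*s1^2*a^2*(ρ:ℂ)^4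 + (840)*s1^2*a^2*(ρ:ℂ)^6 + (530)*s1^2*a^2*(ρ:ℂ)^8 + (92)*s1^2*a^2*(ρ:ℂ)^10 + (-18)*s1^2*a^2*(ρ:ℂ)^12) * hs2x + ((18)*s1^3*t3*Complex.I + (-92)*s1^3*t3*(ρ:ℂ)^2*Complex.I + (-530)*s1^3*t3*(ρ:ℂ)^4*Complex.I + (-840)*s1^3*t3*(ρ:ℂ)^6*Complex.I + (-530)*s1^3*t3*(ρ:ℂ)^8*Complex.I + (-92)*s1^3*t3*(ρ:ℂ)^10*Complex.I + (18)*s1^3*t3*(ρ:ℂ)^12*Complex.I + (-18)*s1^3*s5 + (92)*s1^3*s5*(ρ:ℂ)^2 + (530)*s1^3*s5*(ρ:ℂ)^4 + (840)*s1^3*s5*(ρ:ℂ)^6 + (530)*s1^3*s5*(ρ:ℂ)^8 + (92)*s1^3*s5*(ρ:ℂ)^10 + (-18)*s1^3*s5*(ρ:ℂ)^12) * hs3x + ((30)*s1^2*a*Complex.I + ((-640)/(3))*s1^2*a*(ρ:ℂ)^2*Complex.I + ((-1460)/(3))*s1^2*a*(ρ:ℂ)^4*Complex.I + ((-640)/(3))*s1^2*a*(ρ:ℂ)^6*Complex.I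 + (30)*s1^2*a*(ρ:ℂ)^8*Complex.I + (-6)*s1^2*t1*Complex.I + ((110)/(3))*s1^2*t1*(ρ:ℂ)^2*Complex.I + (140)*s1^2*t1*(ρ:ℂ)^4*Complex.I + (140)*s1^2*t1*(ρ:ℂ)^6*Complex.I + ((110)/(3))*s1^2*t1*(ρ:ℂ)^8*Complex.I + (-6)*s1^2*t1*(ρ:ℂ)^10*Complex.I) * hs5x + ((-150)*s1^2*a^2*Complex.I^2 + ((2750)/(3))*s1^2*a^2*(ρ:ℂ)^2*Complex.I^2 + (3500)*s1^2*a^2*(ρ:ℂ)^4*Complex.I^2 + (3500)*s1^2*a^2*(ρ:ℂ)^6*Complex.I^2 + ((2750)/(3))*s1^2*a^2*(ρ:ℂ)^8*Complex.I^2 + (-150)*s1^2*a^2*(ρ:ℂ)^10*Complex.I^2 + (18)*s1^3*t3*Complex.I^2 + (-74)*s1^3*t3*(ρ:ℂ)^2*Complex.I^2 + (-622)*s1^3*t3*(ρ:ℂ)^4*Complex.I^2 + (-1370)*s1^3*t3*(ρ:ℂ)^6*Complex.I^2 + (-1370)*s1^3*t3*(ρ:ℂ)^8*Complex.I^2 +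 (-622)*s1^3*t3*(ρ:ℂ)^10*Complex.I^2 + (-74)*s1^3*t3*(ρ:ℂ)^12*Complex.I^2 + (18)*s1^3*t3*(ρ:ℂ)^14*Complex.I^2) * ht1 + (((-21)/(2))*s1^2*a*Complex.I^2 + ((206)/(3))*s1^2*a*(ρ:ℂ)^2*Complex.I^2 + ((435)/(2))*s1^2*a*(ρ:ℂ)^4*Complex.I^2 + (140)*s1^2*a*(ρ:ℂ)^6*Complex.I^2 + ((-245)/(6))*s1^2*a*(ρ:ℂ)^8*Complex.I^2 + (-38)*s1^2*a*(ρ:ℂ)^10*Complex.I^2 + ((9)/(2))*s1^2*a*(ρ:ℂ)^12*Complex.I^2) * ht3x))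
      | ((refine scale_cancel (hMne ((18:ℂ)) (by norm_num) 3 5 1) ?_; linear_combination ((-525)*s1^2*a^3*Complex.I + ((11875)/(3))*s1^2*a^3*(ρ:ℂ)^2*Complex.I + ((20750)/(3))*s1^2*a^3*(ρ:ℂ)^4*Complex.I + ((250)/(3))*s1^2*a^3*(ρ:ℂ)^6*Complex.I + (-2125)*s1^2*a^3*(ρ:ℂ)^8*Complex.I + (225)*s1^2*a^3*(ρ:ℂ)^10*Complex.I) * hI + (((135)/(2))*s1^2*a*Complex.I + (-480)*s1^2*a*(ρ:ℂ)^2*Complex.I + (-1095)*s1^2*a*(ρ:ℂ)^4*Complex.I + (-480)*s1^2*a*(ρ:ℂ)^6*Complex.I + ((135)/(2))*s1^2*a*(ρ:ℂ)^8*Complex.I) * hkey + ((54)*s1^2*Complex.I + (-276)*s1^2*(ρ:ℂ)^2*Complex.I + (-1590)*s1^2*(ρ:ℂ)^4*Complex.I + (-2520)*s1^2*(ρ:ℂ)^6*Complex.I + (-1590)*s1^2*(ρ:ℂ)^8*Complex.I + (-276)*s1^2*(ρ:ℂ)^10*Complex.I + (54)*s1^2*(ρ:ℂ)^12*Complex.I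 + (18)*s1^2*a^2*Complex.I + (-92)*s1^2*a^2*(ρ:ℂ)^2*Complex.I + (-530)*s1^2*a^2*(ρ:ℂ)^4*Complex.I + (-840)*s1^2*a^2*(ρ:ℂ)^6*Complex.I + (-530)*s1^2*a^2*(ρ:ℂ)^8*Complex.I + (-92)*s1^2*a^2*(ρ:ℂ)^10*Complex.I + (18)*s1^2*a^2*(ρ:ℂ)^12*Complex.I) * hs2x + ((18)*s1^3*t3 + (-92)*s1^3*t3*(ρ:ℂ)^2 + (-530)*s1^3*t3*(ρ:ℂ)^4 + (-840)*s1^3*t3*(ρ:ℂ)^6 + (-530)*s1^3*t3*(ρ:ℂ)^8 + (-92)*s1^3*t3*(ρ:ℂ)^10 + (18)*s1^3*t3*(ρ:ℂ)^12 + (18)*s1^3*s5*Complex.I + (-92)*s1^3*s5*(ρ:ℂ)^2*Complex.I + (-530)*s1^3*s5*(ρ:ℂ)^4*Complex.I + (-840)*s1^3*s5*(ρ:ℂ)^6*Complex.I + (-530)*s1^3*s5*(ρ:ℂ)^8*Complex.I + (-92)*s1^3*s5*(ρ:ℂ)^10*Complex.I + (18)*s1^3*s5*(ρ:ℂ)^12*Complex.I)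 * hs3x + ((-30)*s1^2*a*Complex.I^2 + ((640)/(3))*s1^2*a*(ρ:ℂ)^2*Complex.I^2 + ((1460)/(3))*s1^2*a*(ρ:ℂ)^4*Complex.I^2 + ((640)/(3))*s1^2*a*(ρ:ℂ)^6*Complex.I^2 + (-30)*s1^2*a*(ρ:ℂ)^8*Complex.I^2 + (6)*s1^2*t1*Complex.I^2 + ((-110)/(3))*s1^2*t1*(ρ:ℂ)^2*Complex.I^2 + (-140)*s1^2*t1*(ρ:ℂ)^4*Complex.I^2 + (-140)*s1^2*t1*(ρ:ℂ)^6*Complex.I^2 + ((-110)/(3))*s1^2*t1*(ρ:ℂ)^8*Complex.I^2 + (6)*s1^2*t1*(ρ:ℂ)^10*Complex.I^2) * hs5x + ((150)*s1^2*a^2*Complex.I^3 + ((-2750)/(3))*s1^2*a^2*(ρ:ℂ)^2*Complex.I^3 + (-3500)*s1^2*a^2*(ρ:ℂ)^4*Complex.I^3 + (-3500)*s1^2*a^2*(ρ:ℂ)^6*Complex.I^3 + ((-2750)/(3))*s1^2*a^2*(ρ:ℂ)^8*Complex.I^3 + (150)*s1^2*a^2*(ρ:ℂ)^10*Complex.I^3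 + (18)*s1^3*t3*Complex.I + (-74)*s1^3*t3*(ρ:ℂ)^2*Complex.I + (-622)*s1^3*t3*(ρ:ℂ)^4*Complex.I + (-1370)*s1^3*t3*(ρ:ℂ)^6*Complex.I + (-1370)*s1^3*t3*(ρ:ℂ)^8*Complex.I + (-622)*s1^3*t3*(ρ:ℂ)^10*Complex.I + (-74)*s1^3*t3*(ρ:ℂ)^12*Complex.I + (18)*s1^3*t3*(ρ:ℂ)^14*Complex.I) * ht1 + (((-21)/(2))*s1^2*a*Complex.I + ((206)/(3))*s1^2*a*(ρ:ℂ)^2*Complex.I + ((435)/(2))*s1^2*a*(ρ:ℂ)^4*Complex.I + (140)*s1^2*a*(ρ:ℂ)^6*Complex.I + ((-245)/(6))*s1^2*a*(ρ:ℂ)^8*Complex.I + (-38)*s1^2*a*(ρ:ℂ)^10*Complex.I + ((9)/(2))*s1^2*a*(ρ:ℂ)^12*Complex.I) * ht3x))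
      | (ring1)
      | ((refine scale_cancel (hMne ((18:ℂ)) (by norm_num) 3 5 1) ?_; linear_combination (((-315)/(2))*s1^2*a^3*(ρ:ℂ) + (1555)*s1^2*a^3*(ρ:ℂ)^3 + ((-4175)/(6))*s1^2*a^3*(ρ:ℂ)^5 + ((-14450)/(3))*s1^2*a^3*(ρ:ℂ)^7 + ((-4175)/(6))*s1^2*a^3*(ρ:ℂ)^9 + (1555)*s1^2*a^3*(ρ:ℂ)^11 + ((-315)/(2))*s1^2*a^3*(ρ:ℂ)^13) * hI + (((135)/(2))*s1^2*a*(ρ:ℂ) + (-480)*s1^2*a*(ρ:ℂ)^3 + (-1095)*s1^2*a*(ρ:ℂ)^5 + (-480)*s1^2*a*(ρ:ℂ)^7 + ((135)/(2))*s1^2*a*(ρ:ℂ)^9) * hkey + ((54)*s1^2*(ρ:ℂ) + (-276)*s1^2*(ρ:ℂ)^3 + (-1590)*s1^2*(ρ:ℂ)^5 + (-2520)*s1^2*(ρ:ℂ)^7 + (-1590)*s1^2*(ρ:ℂ)^9 + (-276)*s1^2*(ρ:ℂ)^11 + (54)*s1^2*(ρ:ℂ)^13 + (18)*s1^2*a^2*(ρ:ℂ)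 + (-92)*s1^2*a^2*(ρ:ℂ)^3 + (-530)*s1^2*a^2*(ρ:ℂ)^5 + (-840)*s1^2*a^2*(ρ:ℂ)^7 + (-530)*s1^2*a^2*(ρ:ℂ)^9 + (-92)*s1^2*a^2*(ρ:ℂ)^11 + (18)*s1^2*a^2*(ρ:ℂ)^13) * hs2x + ((-18)*s1^3*t3*(ρ:ℂ)^3*Complex.I + (92)*s1^3*t3*(ρ:ℂ)^5*Complex.I + (530)*s1^3*t3*(ρ:ℂ)^7*Complex.I + (840)*s1^3*t3*(ρ:ℂ)^9*Complex.I + (530)*s1^3*t3*(ρ:ℂ)^11*Complex.I + (92)*s1^3*t3*(ρ:ℂ)^13*Complex.I + (-18)*s1^3*t3*(ρ:ℂ)^15*Complex.I + (18)*s1^3*s5*(ρ:ℂ)^5 + (-92)*s1^3*s5*(ρ:ℂ)^7 + (-530)*s1^3*s5*(ρ:ℂ)^9 + (-840)*s1^3*s5*(ρ:ℂ)^11 + (-530)*s1^3*s5*(ρ:ℂ)^13 + (-92)*s1^3*s5*(ρ:ℂ)^15 + (18)*s1^3*s5*(ρ:ℂ)^17) * hs3x + ((-30)*s1^2*a*(ρ:ℂ)^5*Complex.I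 + ((640)/(3))*s1^2*a*(ρ:ℂ)^7*Complex.I + ((1460)/(3))*s1^2*a*(ρ:ℂ)^9*Complex.I + ((640)/(3))*s1^2*a*(ρ:ℂ)^11*Complex.I + (-30)*s1^2*a*(ρ:ℂ)^13*Complex.I + (6)*s1^2*t1*(ρ:ℂ)^3*Complex.I + ((-110)/(3))*s1^2*t1*(ρ:ℂ)^5*Complex.I + (-140)*s1^2*t1*(ρ:ℂ)^7*Complex.I + (-140)*s1^2*t1*(ρ:ℂ)^9*Complex.I + ((-110)/(3))*s1^2*t1*(ρ:ℂ)^11*Complex.I + (6)*s1^2*t1*(ρ:ℂ)^13*Complex.I) * hs5x + ((150)*s1^2*a^2*(ρ:ℂ)^3*Complex.I^2 + ((-2750)/(3))*s1^2*a^2*(ρ:ℂ)^5*Complex.I^2 + (-3500)*s1^2*a^2*(ρ:ℂ)^7*Complex.I^2 + (-3500)*s1^2*a^2*(ρ:ℂ)^9*Complex.I^2 + ((-2750)/(3))*s1^2*a^2*(ρ:ℂ)^11*Complex.I^2 + (150)*s1^2*a^2*(ρ:ℂ)^13*Complex.I^2 + (-18)*s1^3*t3*(ρ:ℂ)*Complex.I^2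 + (74)*s1^3*t3*(ρ:ℂ)^3*Complex.I^2 + (622)*s1^3*t3*(ρ:ℂ)^5*Complex.I^2 + (1370)*s1^3*t3*(ρ:ℂ)^7*Complex.I^2 + (1370)*s1^3*t3*(ρ:ℂ)^9*Complex.I^2 + (622)*s1^3*t3*(ρ:ℂ)^11*Complex.I^2 + (74)*s1^3*t3*(ρ:ℂ)^13*Complex.I^2 + (-18)*s1^3*t3*(ρ:ℂ)^15*Complex.I^2) * ht1 + (((-9)/(2))*s1^2*a*(ρ:ℂ)*Complex.I^2 + (38)*s1^2*a*(ρ:ℂ)^3*Complex.I^2 + ((245)/(6))*s1^2*a*(ρ:ℂ)^5*Complex.I^2 + (-140)*s1^2*a*(ρ:ℂ)^7*Complex.I^2 + ((-435)/(2))*s1^2*a*(ρ:ℂ)^9*Complex.I^2 + ((-206)/(3))*s1^2*a*(ρ:ℂ)^11*Complex.I^2 + ((21)/(2))*s1^2*a*(ρ:ℂ)^13*Complex.I^2) * ht3x))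
      | ((refine scale_cancel (hMne ((18:ℂ)) (by norm_num) 3 5 1) ?_; linear_combination ((-225)*s1^2*a^3*(ρ:ℂ)^3*Complex.I + (2125)*s1^2*a^3*(ρ:ℂ)^5*Complex.I + ((-250)/(3))*s1^2*a^3*(ρ:ℂ)^7*Complex.I + ((-20750)/(3))*s1^2*a^3*(ρ:ℂ)^9*Complex.I + ((-11875)/(3))*s1^2*a^3*(ρ:ℂ)^11*Complex.I + (525)*s1^2*a^3*(ρ:ℂ)^13*Complex.I) * hI + (((-135)/(2))*s1^2*a*(ρ:ℂ)*Complex.I + (480)*s1^2*a*(ρ:ℂ)^3*Complex.I + (1095)*s1^2*a*(ρ:ℂ)^5*Complex.I + (480)*s1^2*a*(ρ:ℂ)^7*Complex.I + ((-135)/(2))*s1^2*a*(ρ:ℂ)^9*Complex.I) * hkey + ((-54)*s1^2*(ρ:ℂ)*Complex.I + (276)*s1^2*(ρ:ℂ)^3*Complex.I + (1590)*s1^2*(ρ:ℂ)^5*Complex.I + (2520)*s1^2*(ρ:ℂ)^7*Complex.I + (1590)*s1^2*(ρ:ℂ)^9*Complex.I + (276)*s1^2*(ρ:ℂ)^11*Complex.I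 + (-54)*s1^2*(ρ:ℂ)^13*Complex.I + (-18)*s1^2*a^2*(ρ:ℂ)*Complex.I + (92)*s1^2*a^2*(ρ:ℂ)^3*Complex.I + (530)*s1^2*a^2*(ρ:ℂ)^5*Complex.I + (840)*s1^2*a^2*(ρ:ℂ)^7*Complex.I + (530)*s1^2*a^2*(ρ:ℂ)^9*Complex.I + (92)*s1^2*a^2*(ρ:ℂ)^11*Complex.I + (-18)*s1^2*a^2*(ρ:ℂ)^13*Complex.I) * hs2x + ((-18)*s1^3*t3*(ρ:ℂ)^3 + (92)*s1^3*t3*(ρ:ℂ)^5 + (530)*s1^3*t3*(ρ:ℂ)^7 + (840)*s1^3*t3*(ρ:ℂ)^9 + (530)*s1^3*t3*(ρ:ℂ)^11 + (92)*s1^3*t3*(ρ:ℂ)^13 + (-18)*s1^3*t3*(ρ:ℂ)^15 + (-18)*s1^3*s5*(ρ:ℂ)^5*Complex.I + (92)*s1^3*s5*(ρ:ℂ)^7*Complex.I + (530)*s1^3*s5*(ρ:ℂ)^9*Complex.I + (840)*s1^3*s5*(ρ:ℂ)^11*Complex.I + (530)*s1^3*s5*(ρ:ℂ)^13*Complex.I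 + (92)*s1^3*s5*(ρ:ℂ)^15*Complex.I + (-18)*s1^3*s5*(ρ:ℂ)^17*Complex.I) * hs3x + ((30)*s1^2*a*(ρ:ℂ)^5*Complex.I^2 + ((-640)/(3))*s1^2*a*(ρ:ℂ)^7*Complex.I^2 + ((-1460)/(3))*s1^2*a*(ρ:ℂ)^9*Complex.I^2 + ((-640)/(3))*s1^2*a*(ρ:ℂ)^11*Complex.I^2 + (30)*s1^2*a*(ρ:ℂ)^13*Complex.I^2 + (-6)*s1^2*t1*(ρ:ℂ)^3*Complex.I^2 + ((110)/(3))*s1^2*t1*(ρ:ℂ)^5*Complex.I^2 + (140)*s1^2*t1*(ρ:ℂ)^7*Complex.I^2 + (140)*s1^2*t1*(ρ:ℂ)^9*Complex.I^2 + ((110)/(3))*s1^2*t1*(ρ:ℂ)^11*Complex.I^2 + (-6)*s1^2*t1*(ρ:ℂ)^13*Complex.I^2) * hs5x + ((-150)*s1^2*a^2*(ρ:ℂ)^3*Complex.I^3 + ((2750)/(3))*s1^2*a^2*(ρ:ℂ)^5*Complex.I^3 + (3500)*s1^2*a^2*(ρ:ℂ)^7*Complex.I^3 + (3500)*s1^2*a^2*(ρ:ℂ)^9*Complex.I^3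 + ((2750)/(3))*s1^2*a^2*(ρ:ℂ)^11*Complex.I^3 + (-150)*s1^2*a^2*(ρ:ℂ)^13*Complex.I^3 + (-18)*s1^3*t3*(ρ:ℂ)*Complex.I + (74)*s1^3*t3*(ρ:ℂ)^3*Complex.I + (622)*s1^3*t3*(ρ:ℂ)^5*Complex.I + (1370)*s1^3*t3*(ρ:ℂ)^7*Complex.I + (1370)*s1^3*t3*(ρ:ℂ)^9*Complex.I + (622)*s1^3*t3*(ρ:ℂ)^11*Complex.I + (74)*s1^3*t3*(ρ:ℂ)^13*Complex.I + (-18)*s1^3*t3*(ρ:ℂ)^15*Complex.I) * ht1 + (((-9)/(2))*s1^2*a*(ρ:ℂ)*Complex.I + (38)*s1^2*a*(ρ:ℂ)^3*Complex.I + ((245)/(6))*s1^2*a*(ρ:ℂ)^5*Complex.I + (-140)*s1^2*a*(ρ:ℂ)^7*Complex.I + ((-435)/(2))*s1^2*a*(ρ:ℂ)^9*Complex.I + ((-206)/(3))*s1^2*a*(ρ:ℂ)^11*Complex.I + ((21)/(2))*s1^2*a*(ρ:ℂ)^13*Complex.I) * ht3x))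
  have hb45 : ⁅X4, X5⁆ = (a*(a^2-1)) • T + (-2 : ℂ) • X3 := by
    simp only [hT, hX1, hX2, hX3, hX4, hX5, hv0, hv1, hv2, hv3, hv4, hv5, lie_add, add_lie, lie_sub, sub_lie, lie_smul, smul_lie, lie_self, hl01, hl02, hl03, hl04, hl05, hl12, hl13, hl14, hl15, hl23, hl24, hl25, hl34, hl35, hl45, hr01, hr02, hr03, hr04, hr05, hr12, hr13, hr14, hr15, hr23, hr24, hr25, hr34, hr35, hr45, smul_zero, lie_zero, zero_lie, add_zero, zero_add, smul_neg, neg_zero]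
    try match_scalars
    all_goals first
      | (ring1)
      | ((refine scale_cancel (hMne ((54:ℂ)) (by norm_num) 2 5 1) ?_; linear_combination ((-450)*s1^2*a^3*Complex.I + (4250)*s1^2*a^3*(ρ:ℂ)^2*Complex.I + ((-500)/(3))*s1^2*a^3*(ρ:ℂ)^4*Complex.I + ((-41500)/(3))*s1^2*a^3*(ρ:ℂ)^6*Complex.I + ((-23750)/(3))*s1^2*a^3*(ρ:ℂ)^8*Complex.I + (1050)*s1^2*a^3*(ρ:ℂ)^10*Complex.I) * hI + ((81)*s1^2*a*Complex.I + (-630)*s1^2*a*(ρ:ℂ)^2*Complex.I + (-930)*s1^2*a*(ρ:ℂ)^4*Complex.I + (300)*s1^2*a*(ρ:ℂ)^6*Complex.I + (465)*s1^2*a*(ρ:ℂ)^8*Complex.I + (-54)*s1^2*a*(ρ:ℂ)^10*Complex.I) * hkey + ((108)*s1^2 + (-552)*s1^2*(ρ:ℂ)^2 + (-3180)*s1^2*(ρ:ℂ)^4 + (-5040)*s1^2*(ρ:ℂ)^6 + (-3180)*s1^2*(ρ:ℂ)^8 + (-552)*s1^2*(ρ:ℂ)^10 + (108)*s1^2*(ρ:ℂ)^12)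 * hs3x + ((-18)*s1^2*t3 + (18)*s1^2*t3*Complex.I^2 + (92)*s1^2*t3*(ρ:ℂ)^2 + (-92)*s1^2*t3*(ρ:ℂ)^2*Complex.I^2 + (530)*s1^2*t3*(ρ:ℂ)^4 + (-530)*s1^2*t3*(ρ:ℂ)^4*Complex.I^2 + (840)*s1^2*t3*(ρ:ℂ)^6 + (-840)*s1^2*t3*(ρ:ℂ)^6*Complex.I^2 + (530)*s1^2*t3*(ρ:ℂ)^8 + (-530)*s1^2*t3*(ρ:ℂ)^8*Complex.I^2 + (92)*s1^2*t3*(ρ:ℂ)^10 + (-92)*s1^2*t3*(ρ:ℂ)^10*Complex.I^2 + (-18)*s1^2*t3*(ρ:ℂ)^12 + (18)*s1^2*t3*(ρ:ℂ)^12*Complex.I^2 + (-36)*s1^2*s5*Complex.I + (184)*s1^2*s5*(ρ:ℂ)^2*Complex.I + (1060)*s1^2*s5*(ρ:ℂ)^4*Complex.I + (1680)*s1^2*s5*(ρ:ℂ)^6*Complex.I + (1060)*s1^2*s5*(ρ:ℂ)^8*Complex.I + (184)*s1^2*s5*(ρ:ℂ)^10*Complex.I + (-36)*s1^2*s5*(ρ:ℂ)^12*Complex.I)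 * hs4x + ((18)*s1*t2 + (-18)*s1*t2*Complex.I^2 + (-110)*s1*t2*(ρ:ℂ)^2 + (110)*s1*t2*(ρ:ℂ)^2*Complex.I^2 + (-420)*s1*t2*(ρ:ℂ)^4 + (420)*s1*t2*(ρ:ℂ)^4*Complex.I^2 + (-420)*s1*t2*(ρ:ℂ)^6 + (420)*s1*t2*(ρ:ℂ)^6*Complex.I^2 + (-110)*s1*t2*(ρ:ℂ)^8 + (110)*s1*t2*(ρ:ℂ)^8*Complex.I^2 + (18)*s1*t2*(ρ:ℂ)^10 + (-18)*s1*t2*(ρ:ℂ)^10*Complex.I^2 + (-60)*s1^2*a*Complex.I^2 + ((1280)/(3))*s1^2*a*(ρ:ℂ)^2*Complex.I^2 + ((2920)/(3))*s1^2*a*(ρ:ℂ)^4*Complex.I^2 + ((1280)/(3))*s1^2*a*(ρ:ℂ)^6*Complex.I^2 + (-60)*s1^2*a*(ρ:ℂ)^8*Complex.I^2) * hs5x + ((108)*s1^2*Complex.I + (-444)*s1^2*(ρ:ℂ)^2*Complex.I + (-3732)*s1^2*(ρ:ℂ)^4*Complex.I + (-8220)*s1^2*(ρ:ℂ)^6*Complex.I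 + (-8220)*s1^2*(ρ:ℂ)^8*Complex.I + (-3732)*s1^2*(ρ:ℂ)^10*Complex.I + (-444)*s1^2*(ρ:ℂ)^12*Complex.I + (108)*s1^2*(ρ:ℂ)^14*Complex.I) * ht1 + ((450)*s1*a^2*Complex.I + (-450)*s1*a^2*Complex.I^3 + (-2750)*s1*a^2*(ρ:ℂ)^2*Complex.I + (2750)*s1*a^2*(ρ:ℂ)^2*Complex.I^3 + (-10500)*s1*a^2*(ρ:ℂ)^4*Complex.I + (10500)*s1*a^2*(ρ:ℂ)^4*Complex.I^3 + (-10500)*s1*a^2*(ρ:ℂ)^6*Complex.I + (10500)*s1*a^2*(ρ:ℂ)^6*Complex.I^3 + (-2750)*s1*a^2*(ρ:ℂ)^8*Complex.I + (2750)*s1*a^2*(ρ:ℂ)^8*Complex.I^3 + (450)*s1*a^2*(ρ:ℂ)^10*Complex.I + (-450)*s1*a^2*(ρ:ℂ)^10*Complex.I^3 + (-108)*s1^2*t3*Complex.I + (444)*s1^2*t3*(ρ:ℂ)^2*Complex.I + (3732)*s1^2*t3*(ρ:ℂ)^4*Complex.I + (8220)*s1^2*t3*(ρ:ℂ)^6*Complex.I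 + (8220)*s1^2*t3*(ρ:ℂ)^8*Complex.I + (3732)*s1^2*t3*(ρ:ℂ)^10*Complex.I + (444)*s1^2*t3*(ρ:ℂ)^12*Complex.I + (-108)*s1^2*t3*(ρ:ℂ)^14*Complex.I) * ht2 + ((6)*s1^2*a*Complex.I + (15)*s1^2*a*Complex.I^3 + ((-47)/(3))*s1^2*a*(ρ:ℂ)^2*Complex.I + ((-275)/(3))*s1^2*a*(ρ:ℂ)^2*Complex.I^3 + ((-805)/(3))*s1^2*a*(ρ:ℂ)^4*Complex.I + (-350)*s1^2*a*(ρ:ℂ)^4*Complex.I^3 + (-630)*s1^2*a*(ρ:ℂ)^6*Complex.I + (-350)*s1^2*a*(ρ:ℂ)^6*Complex.I^3 + ((-1580)/(3))*s1^2*a*(ρ:ℂ)^8*Complex.I + ((-275)/(3))*s1^2*a*(ρ:ℂ)^8*Complex.I^3 + ((-367)/(3))*s1^2*a*(ρ:ℂ)^10*Complex.I + (15)*s1^2*a*(ρ:ℂ)^10*Complex.I^3 + (21)*s1^2*a*(ρ:ℂ)^12*Complex.I) * ht3x))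
      | ((refine scale_cancel (hMne ((54:ℂ)) (by norm_num) 2 5 1) ?_; linear_combination ((1050)*s1^2*a^3*(ρ:ℂ)^4*Complex.I + ((-23750)/(3))*s1^2*a^3*(ρ:ℂ)^6*Complex.I + ((-41500)/(3))*s1^2*a^3*(ρ:ℂ)^8*Complex.I + ((-500)/(3))*s1^2*a^3*(ρ:ℂ)^10*Complex.I + (4250)*s1^2*a^3*(ρ:ℂ)^12*Complex.I + (-450)*s1^2*a^3*(ρ:ℂ)^14*Complex.I) * hI + ((-54)*s1^2*a*Complex.I + (465)*s1^2*a*(ρ:ℂ)^2*Complex.I + (300)*s1^2*a*(ρ:ℂ)^4*Complex.I + (-930)*s1^2*a*(ρ:ℂ)^6*Complex.I + (-630)*s1^2*a*(ρ:ℂ)^8*Complex.I + (81)*s1^2*a*(ρ:ℂ)^10*Complex.I) * hkey + ((108)*s1^2*(ρ:ℂ)^2 + (-552)*s1^2*(ρ:ℂ)^4 + (-3180)*s1^2*(ρ:ℂ)^6 + (-5040)*s1^2*(ρ:ℂ)^8 + (-3180)*s1^2*(ρ:ℂ)^10 + (-552)*s1^2*(ρ:ℂ)^12 + (108)*s1^2*(ρ:ℂ)^14)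 * hs3x + ((-18)*s1^2*t3*(ρ:ℂ)^4 + (18)*s1^2*t3*(ρ:ℂ)^4*Complex.I^2 + (92)*s1^2*t3*(ρ:ℂ)^6 + (-92)*s1^2*t3*(ρ:ℂ)^6*Complex.I^2 + (530)*s1^2*t3*(ρ:ℂ)^8 + (-530)*s1^2*t3*(ρ:ℂ)^8*Complex.I^2 + (840)*s1^2*t3*(ρ:ℂ)^10 + (-840)*s1^2*t3*(ρ:ℂ)^10*Complex.I^2 + (530)*s1^2*t3*(ρ:ℂ)^12 + (-530)*s1^2*t3*(ρ:ℂ)^12*Complex.I^2 + (92)*s1^2*t3*(ρ:ℂ)^14 + (-92)*s1^2*t3*(ρ:ℂ)^14*Complex.I^2 + (-18)*s1^2*t3*(ρ:ℂ)^16 + (18)*s1^2*t3*(ρ:ℂ)^16*Complex.I^2 + (-36)*s1^2*s5*(ρ:ℂ)^6*Complex.I + (184)*s1^2*s5*(ρ:ℂ)^8*Complex.I + (1060)*s1^2*s5*(ρ:ℂ)^10*Complex.I + (1680)*s1^2*s5*(ρ:ℂ)^12*Complex.I + (1060)*s1^2*s5*(ρ:ℂ)^14*Complex.I + (184)*s1^2*s5*(ρ:ℂ)^16*Complex.I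 + (-36)*s1^2*s5*(ρ:ℂ)^18*Complex.I) * hs4x + ((18)*s1*t2*(ρ:ℂ)^4 + (-18)*s1*t2*(ρ:ℂ)^4*Complex.I^2 + (-110)*s1*t2*(ρ:ℂ)^6 + (110)*s1*t2*(ρ:ℂ)^6*Complex.I^2 + (-420)*s1*t2*(ρ:ℂ)^8 + (420)*s1*t2*(ρ:ℂ)^8*Complex.I^2 + (-420)*s1*t2*(ρ:ℂ)^10 + (420)*s1*t2*(ρ:ℂ)^10*Complex.I^2 + (-110)*s1*t2*(ρ:ℂ)^12 + (110)*s1*t2*(ρ:ℂ)^12*Complex.I^2 + (18)*s1*t2*(ρ:ℂ)^14 + (-18)*s1*t2*(ρ:ℂ)^14*Complex.I^2 + (-60)*s1^2*a*(ρ:ℂ)^6*Complex.I^2 + ((1280)/(3))*s1^2*a*(ρ:ℂ)^8*Complex.I^2 + ((2920)/(3))*s1^2*a*(ρ:ℂ)^10*Complex.I^2 + ((1280)/(3))*s1^2*a*(ρ:ℂ)^12*Complex.I^2 + (-60)*s1^2*a*(ρ:ℂ)^14*Complex.I^2) * hs5x + ((108)*s1^2*Complex.I + (-444)*s1^2*(ρ:ℂ)^2*Complex.I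 + (-3732)*s1^2*(ρ:ℂ)^4*Complex.I + (-8220)*s1^2*(ρ:ℂ)^6*Complex.I + (-8220)*s1^2*(ρ:ℂ)^8*Complex.I + (-3732)*s1^2*(ρ:ℂ)^10*Complex.I + (-444)*s1^2*(ρ:ℂ)^12*Complex.I + (108)*s1^2*(ρ:ℂ)^14*Complex.I) * ht1 + ((450)*s1*a^2*(ρ:ℂ)^4*Complex.I + (-450)*s1*a^2*(ρ:ℂ)^4*Complex.I^3 + (-2750)*s1*a^2*(ρ:ℂ)^6*Complex.I + (2750)*s1*a^2*(ρ:ℂ)^6*Complex.I^3 + (-10500)*s1*a^2*(ρ:ℂ)^8*Complex.I + (10500)*s1*a^2*(ρ:ℂ)^8*Complex.I^3 + (-10500)*s1*a^2*(ρ:ℂ)^10*Complex.I + (10500)*s1*a^2*(ρ:ℂ)^10*Complex.I^3 + (-2750)*s1*a^2*(ρ:ℂ)^12*Complex.I + (2750)*s1*a^2*(ρ:ℂ)^12*Complex.I^3 + (450)*s1*a^2*(ρ:ℂ)^14*Complex.I + (-450)*s1*a^2*(ρ:ℂ)^14*Complex.I^3 + (-108)*s1^2*t3*(ρ:ℂ)^2*Complex.I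 + (444)*s1^2*t3*(ρ:ℂ)^4*Complex.I + (3732)*s1^2*t3*(ρ:ℂ)^6*Complex.I + (8220)*s1^2*t3*(ρ:ℂ)^8*Complex.I + (8220)*s1^2*t3*(ρ:ℂ)^10*Complex.I + (3732)*s1^2*t3*(ρ:ℂ)^12*Complex.I + (444)*s1^2*t3*(ρ:ℂ)^14*Complex.I + (-108)*s1^2*t3*(ρ:ℂ)^16*Complex.I) * ht2 + ((21)*s1^2*a*(ρ:ℂ)^2*Complex.I + ((-367)/(3))*s1^2*a*(ρ:ℂ)^4*Complex.I + (15)*s1^2*a*(ρ:ℂ)^4*Complex.I^3 + ((-1580)/(3))*s1^2*a*(ρ:ℂ)^6*Complex.I + ((-275)/(3))*s1^2*a*(ρ:ℂ)^6*Complex.I^3 + (-630)*s1^2*a*(ρ:ℂ)^8*Complex.I + (-350)*s1^2*a*(ρ:ℂ)^8*Complex.I^3 + ((-805)/(3))*s1^2*a*(ρ:ℂ)^10*Complex.I + (-350)*s1^2*a*(ρ:ℂ)^10*Complex.I^3 + ((-47)/(3))*s1^2*a*(ρ:ℂ)^12*Complex.I + ((-275)/(3))*s1^2*a*(ρ:ℂ)^12*Complex.I^3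 + (6)*s1^2*a*(ρ:ℂ)^14*Complex.I + (15)*s1^2*a*(ρ:ℂ)^14*Complex.I^3) * ht3x))
  have hek1 : (((ρ:ℂ)^2-1)*s3) • k1 = ((1)*t1 + (-1)*s3*(ρ:ℂ)^2*Complex.I) • T + ((-1 : ℂ)) • X3 := by
    simp only [hT, hX1, hX2, hX3, hX4, hX5, hv0, hv1, hv2, hv3, hv4, hv5, lie_add, add_lie, lie_sub, sub_lie, lie_smul, smul_lie, lie_self, hl01, hl02, hl03, hl04, hl05, hl12, hl13, hl14, hl15, hl23, hl24, hl25, hl34, hl35, hl45, hr01, hr02, hr03, hr04, hr05, hr12, hr13, hr14, hr15, hr23, hr24, hr25, hr34, hr35, hr45, smul_zero, lie_zero, zero_lie, add_zero, zero_add, smul_neg, neg_zero]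
    try match_scalars
    all_goals first
      | (ring1)
      | ((refine scale_cancel (hMne ((1:ℂ)) (by norm_num) 0 1 0) ?_; linear_combination ((-5)*a*(ρ:ℂ)^2*Complex.I) * hI + ((1)*(ρ:ℂ)^2 + (1)*(ρ:ℂ)^2*Complex.I^2) * hs3x))
  have hek2 : (((ρ:ℂ)^2-1)*s3) • k2 = ((-1)*t1 + (1)*s3*Complex.I) • T + ((1 : ℂ)) • X3 := by
    simp only [hT, hX1, hX2, hX3, hX4, hX5, hv0, hv1, hv2, hv3, hv4, hv5, lie_add, add_lie, lie_sub, sub_lie, lie_smul, smul_lie, lie_self, hl01, hl02, hl03, hl04, hl05, hl12, hl13, hl14, hl15, hl23, hl24, hl25, hl34, hl35, hl45, hr01, hr02, hr03, hr04, hr05, hr12, hr13, hr14, hr15, hr23, hr24, hr25, hr34, hr35, hr45, smul_zero, lie_zero, zero_lie, add_zero, zero_add, smul_neg, neg_zero]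
    try match_scalars
    all_goals first
      | (ring1)
      | ((refine scale_cancel (hMne ((1:ℂ)) (by norm_num) 0 1 0) ?_; linear_combination ((5)*a*Complex.I) * hI + ((-1) + (-1)*Complex.I^2) * hs3x))
  have hei1 : ((2:ℂ)*((ρ:ℂ)^2-1)*s1*s2*s4*s5) • i1 = ((1)*s2*s5*t2*Complex.I + (1)*s2*s4*s5*(ρ:ℂ)^2) • X1 + ((-1)*s1*s4*t3*Complex.I + (1)*s1*s4*s5*(ρ:ℂ)^2) • X2 + ((-1)*s1*s2*s5*Complex.I) • X4 + ((1)*s1*s2*s4*Complex.I) • X5 := by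
    simp only [hT, hX1, hX2, hX3, hX4, hX5, hv0, hv1, hv2, hv3, hv4, hv5, lie_add, add_lie, lie_sub, sub_lie, lie_smul, smul_lie, lie_self, hl01, hl02, hl03, hl04, hl05, hl12, hl13, hl14, hl15, hl23, hl24, hl25, hl34, hl35, hl45, hr01, hr02, hr03, hr04, hr05, hr12, hr13, hr14, hr15, hr23, hr24, hr25, hr34, hr35, hr45, smul_zero, lie_zero, zero_lie, add_zero, zero_add, smul_neg, neg_zero]
    try match_scalars
    all_goals first
      | ((refine scale_cancel (hMne ((9:ℂ)) (by norm_num) 2 4 0) ?_; linear_combination ((1250)*s1^2*a^4*Complex.I^2) * hI + ((-18)*s1^2*s4*s5 + (-18)*s1^2*s4*s5*Complex.I^2 + (-54)*s1^2*s4*s5*(ρ:ℂ)^2 + (-54)*s1^2*s4*s5*(ρ:ℂ)^2*Complex.I^2 + (-54)*s1^2*s4*s5*(ρ:ℂ)^4 + (-54)*s1^2*s4*s5*(ρ:ℂ)^4*Complex.I^2 + (-18)*s1^2*s4*s5*(ρ:ℂ)^6 + (-18)*s1^2*s4*s5*(ρ:ℂ)^6*Complex.I^2) * hs2x + ((30)*s1^2*s5*a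 + (30)*s1^2*s5*a*Complex.I^2 + (60)*s1^2*s5*a*(ρ:ℂ)^2 + (60)*s1^2*s5*a*(ρ:ℂ)^2*Complex.I^2 + (30)*s1^2*s5*a*(ρ:ℂ)^4 + (30)*s1^2*s5*a*(ρ:ℂ)^4*Complex.I^2) * hs4x + ((50)*s1^2*a^2*Complex.I + (50)*s1^2*a^2*Complex.I^3) * hs5x))
      | (ring1)
      | ((refine scale_cancel (hMne ((9:ℂ)) (by norm_num) 2 4 0) ?_; linear_combination ((-1250)*s1^2*a^4*(ρ:ℂ)^3*Complex.I^2) * hI + ((18)*s1^2*s4*s5*(ρ:ℂ)^3 + (18)*s1^2*s4*s5*(ρ:ℂ)^3*Complex.I^2 + (54)*s1^2*s4*s5*(ρ:ℂ)^5 + (54)*s1^2*s4*s5*(ρ:ℂ)^5*Complex.I^2 + (54)*s1^2*s4*s5*(ρ:ℂ)^7 + (54)*s1^2*s4*s5*(ρ:ℂ)^7*Complex.I^2 + (18)*s1^2*s4*s5*(ρ:ℂ)^9 + (18)*s1^2*s4*s5*(ρ:ℂ)^9*Complex.I^2) * hs2x + ((-30)*s1^2*s5*a*(ρ:ℂ)^3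 + (-30)*s1^2*s5*a*(ρ:ℂ)^3*Complex.I^2 + (-60)*s1^2*s5*a*(ρ:ℂ)^5 + (-60)*s1^2*s5*a*(ρ:ℂ)^5*Complex.I^2 + (-30)*s1^2*s5*a*(ρ:ℂ)^7 + (-30)*s1^2*s5*a*(ρ:ℂ)^7*Complex.I^2) * hs4x + ((-50)*s1^2*a^2*(ρ:ℂ)^3*Complex.I + (-50)*s1^2*a^2*(ρ:ℂ)^3*Complex.I^3) * hs5x))
  have hei2 : ((2:ℂ)*(ρ:ℂ)*((ρ:ℂ)^2-1)*s1*s2*s4*s5) • i2 = ((1)*s2*s5*t2*Complex.I + (1)*s2*s4*s5) • X1 + ((-1)*s1*s4*t3*Complex.I + (1)*s1*s4*s5) • X2 + ((-1)*s1*s2*s5*Complex.I) • X4 + ((1)*s1*s2*s4*Complex.I) • X5 := by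
    simp only [hT, hX1, hX2, hX3, hX4, hX5, hv0, hv1, hv2, hv3, hv4, hv5, lie_add, add_lie, lie_sub, sub_lie, lie_smul, smul_lie, lie_self, hl01, hl02, hl03, hl04, hl05, hl12, hl13, hl14, hl15, hl23, hl24, hl25, hl34, hl35, hl45, hr01, hr02, hr03, hr04, hr05, hr12, hr13, hr14, hr15, hr23, hr24, hr25, hr34, hr35, hr45, smul_zero, lie_zero, zero_lie, add_zero, zero_add, smul_neg, neg_zero]
    try match_scalars
    all_goals first
      | ((refine scale_cancel (hMne ((9:ℂ)) (by norm_num) 2 4 0) ?_; linear_combination ((1250)*s1^2*a^4*Complex.I^2) * hI + ((-18)*s1^2*s4*s5 + (-18)*s1^2*s4*s5*Complex.I^2 + (-54)*s1^2*s4*s5*(ρ:ℂ)^2 + (-54)*s1^2*s4*s5*(ρ:ℂ)^2*Complex.I^2 + (-54)*s1^2*s4*s5*(ρ:ℂ)^4 + (-54)*s1^2*s4*s5*(ρ:ℂ)^4*Complex.I^2 + (-18)*s1^2*s4*s5*(ρ:ℂ)^6 + (-18)*s1^2*s4*s5*(ρ:ℂ)^6*Complex.I^2) * hs2x + ((30)*s1^2*s5*a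 + (30)*s1^2*s5*a*Complex.I^2 + (60)*s1^2*s5*a*(ρ:ℂ)^2 + (60)*s1^2*s5*a*(ρ:ℂ)^2*Complex.I^2 + (30)*s1^2*s5*a*(ρ:ℂ)^4 + (30)*s1^2*s5*a*(ρ:ℂ)^4*Complex.I^2) * hs4x + ((50)*s1^2*a^2*Complex.I + (50)*s1^2*a^2*Complex.I^3) * hs5x))
      | (ring1)
      | ((refine scale_cancel (hMne ((9:ℂ)) (by norm_num) 2 4 0) ?_; linear_combination ((-1250)*s1^2*a^4*(ρ:ℂ)^3*Complex.I^2) * hI + ((18)*s1^2*s4*s5*(ρ:ℂ)^3 + (18)*s1^2*s4*s5*(ρ:ℂ)^3*Complex.I^2 + (54)*s1^2*s4*s5*(ρ:ℂ)^5 + (54)*s1^2*s4*s5*(ρ:ℂ)^5*Complex.I^2 + (54)*s1^2*s4*s5*(ρ:ℂ)^7 + (54)*s1^2*s4*s5*(ρ:ℂ)^7*Complex.I^2 + (18)*s1^2*s4*s5*(ρ:ℂ)^9 + (18)*s1^2*s4*s5*(ρ:ℂ)^9*Complex.I^2) * hs2x + ((-30)*s1^2*s5*a*(ρ:ℂ)^3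 + (-30)*s1^2*s5*a*(ρ:ℂ)^3*Complex.I^2 + (-60)*s1^2*s5*a*(ρ:ℂ)^5 + (-60)*s1^2*s5*a*(ρ:ℂ)^5*Complex.I^2 + (-30)*s1^2*s5*a*(ρ:ℂ)^7 + (-30)*s1^2*s5*a*(ρ:ℂ)^7*Complex.I^2) * hs4x + ((-50)*s1^2*a^2*(ρ:ℂ)^3*Complex.I + (-50)*s1^2*a^2*(ρ:ℂ)^3*Complex.I^3) * hs5x))
  have hej1 : ((2:ℂ)*((ρ:ℂ)^2-1)*s1*s2*s4*s5) • j1 = ((1)*s2*s5*t2 + (-1)*s2*s4*s5*(ρ:ℂ)^2*Complex.I) • X1 + ((1)*s1*s4*t3 + (1)*s1*s4*s5*(ρ:ℂ)^2*Complex.I) • X2 + ((-1)*s1*s2*s5) • X4 + ((-1)*s1*s2*s4) • X5 := by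
    simp only [hT, hX1, hX2, hX3, hX4, hX5, hv0, hv1, hv2, hv3, hv4, hv5, lie_add, add_lie, lie_sub, sub_lie, lie_smul, smul_lie, lie_self, hl01, hl02, hl03, hl04, hl05, hl12, hl13, hl14, hl15, hl23, hl24, hl25, hl34, hl35, hl45, hr01, hr02, hr03, hr04, hr05, hr12, hr13, hr14, hr15, hr23, hr24, hr25, hr34, hr35, hr45, smul_zero, lie_zero, zero_lie, add_zero, zero_add, smul_neg, neg_zero]
    try match_scalars
    all_goals first
      | (ring1)
      | ((refine scale_cancel (hMne ((9:ℂ)) (by norm_num) 2 4 0) ?_; linear_combination ((-1250)*s1^2*a^4*(ρ:ℂ)^2*Complex.I^2) * hI + ((18)*s1^2*s4*s5*(ρ:ℂ)^2 + (18)*s1^2*s4*s5*(ρ:ℂ)^2*Complex.I^2 + (54)*s1^2*s4*s5*(ρ:ℂ)^4 + (54)*s1^2*s4*s5*(ρ:ℂ)^4*Complex.I^2 + (54)*s1^2*s4*s5*(ρ:ℂ)^6 + (54)*s1^2*s4*s5*(ρ:ℂ)^6*Complex.I^2 + (18)*s1^2*s4*s5*(ρ:ℂ)^8 + (18)*s1^2*s4*s5*(ρ:ℂ)^8*Complex.I^2)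 * hs2x + ((-30)*s1^2*s5*a*(ρ:ℂ)^2 + (-30)*s1^2*s5*a*(ρ:ℂ)^2*Complex.I^2 + (-60)*s1^2*s5*a*(ρ:ℂ)^4 + (-60)*s1^2*s5*a*(ρ:ℂ)^4*Complex.I^2 + (-30)*s1^2*s5*a*(ρ:ℂ)^6 + (-30)*s1^2*s5*a*(ρ:ℂ)^6*Complex.I^2) * hs4x + ((-50)*s1^2*a^2*(ρ:ℂ)^2*Complex.I + (-50)*s1^2*a^2*(ρ:ℂ)^2*Complex.I^3) * hs5x))
      | ((refine scale_cancel (hMne ((9:ℂ)) (by norm_num) 2 4 0) ?_; linear_combination ((1250)*s1^2*a^4*(ρ:ℂ)^3*Complex.I^2) * hI + ((-18)*s1^2*s4*s5*(ρ:ℂ)^3 + (-18)*s1^2*s4*s5*(ρ:ℂ)^3*Complex.I^2 + (-54)*s1^2*s4*s5*(ρ:ℂ)^5 + (-54)*s1^2*s4*s5*(ρ:ℂ)^5*Complex.I^2 + (-54)*s1^2*s4*s5*(ρ:ℂ)^7 + (-54)*s1^2*s4*s5*(ρ:ℂ)^7*Complex.I^2 + (-18)*s1^2*s4*s5*(ρ:ℂ)^9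 + (-18)*s1^2*s4*s5*(ρ:ℂ)^9*Complex.I^2) * hs2x + ((30)*s1^2*s5*a*(ρ:ℂ)^3 + (30)*s1^2*s5*a*(ρ:ℂ)^3*Complex.I^2 + (60)*s1^2*s5*a*(ρ:ℂ)^5 + (60)*s1^2*s5*a*(ρ:ℂ)^5*Complex.I^2 + (30)*s1^2*s5*a*(ρ:ℂ)^7 + (30)*s1^2*s5*a*(ρ:ℂ)^7*Complex.I^2) * hs4x + ((50)*s1^2*a^2*(ρ:ℂ)^3*Complex.I + (50)*s1^2*a^2*(ρ:ℂ)^3*Complex.I^3) * hs5x))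
  have hej2 : ((2:ℂ)*(ρ:ℂ)*((ρ:ℂ)^2-1)*s1*s2*s4*s5) • j2 = ((1)*s2*s5*t2 + (-1)*s2*s4*s5*Complex.I) • X1 + ((1)*s1*s4*t3 + (1)*s1*s4*s5*Complex.I) • X2 + ((-1)*s1*s2*s5) • X4 + ((-1)*s1*s2*s4) • X5 := by
    simp only [hT, hX1, hX2, hX3, hX4, hX5, hv0, hv1, hv2, hv3, hv4, hv5, lie_add, add_lie, lie_sub, sub_lie, lie_smul, smul_lie, lie_self, hl01, hl02, hl03, hl04, hl05, hl12, hl13, hl14, hl15, hl23, hl24, hl25, hl34, hl35, hl45, hr01, hr02, hr03, hr04, hr05, hr12, hr13, hr14, hr15, hr23, hr24, hr25, hr34, hr35, hr45, smul_zero, lie_zero, zero_lie, add_zero, zero_add, smul_neg, neg_zero]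
    try match_scalars
    all_goals first
      | (ring1)
      | ((refine scale_cancel (hMne ((9:ℂ)) (by norm_num) 2 4 0) ?_; linear_combination ((-1250)*s1^2*a^4*Complex.I^2) * hI + ((18)*s1^2*s4*s5 + (18)*s1^2*s4*s5*Complex.I^2 + (54)*s1^2*s4*s5*(ρ:ℂ)^2 + (54)*s1^2*s4*s5*(ρ:ℂ)^2*Complex.I^2 + (54)*s1^2*s4*s5*(ρ:ℂ)^4 + (54)*s1^2*s4*s5*(ρ:ℂ)^4*Complex.I^2 + (18)*s1^2*s4*s5*(ρ:ℂ)^6 + (18)*s1^2*s4*s5*(ρ:ℂ)^6*Complex.I^2) * hs2x + ((-30)*s1^2*s5*a + (-30)*s1^2*s5*a*Complex.I^2 + (-60)*s1^2*s5*a*(ρ:ℂ)^2 + (-60)*s1^2*s5*a*(ρ:ℂ)^2*Complex.I^2 + (-30)*s1^2*s5*a*(ρ:ℂ)^4 + (-30)*s1^2*s5*a*(ρ:ℂ)^4*Complex.I^2) * hs4x + ((-50)*s1^2*a^2*Complex.I + (-50)*s1^2*a^2*Complex.I^3) * hs5x))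
      | ((refine scale_cancel (hMne ((9:ℂ)) (by norm_num) 2 4 0) ?_; linear_combination ((1250)*s1^2*a^4*(ρ:ℂ)*Complex.I^2) * hI + ((-18)*s1^2*s4*s5*(ρ:ℂ) + (-18)*s1^2*s4*s5*(ρ:ℂ)*Complex.I^2 + (-54)*s1^2*s4*s5*(ρ:ℂ)^3 + (-54)*s1^2*s4*s5*(ρ:ℂ)^3*Complex.I^2 + (-54)*s1^2*s4*s5*(ρ:ℂ)^5 + (-54)*s1^2*s4*s5*(ρ:ℂ)^5*Complex.I^2 + (-18)*s1^2*s4*s5*(ρ:ℂ)^7 + (-18)*s1^2*s4*s5*(ρ:ℂ)^7*Complex.I^2) * hs2x + ((30)*s1^2*s5*a*(ρ:ℂ) + (30)*s1^2*s5*a*(ρ:ℂ)*Complex.I^2 + (60)*s1^2*s5*a*(ρ:ℂ)^3 + (60)*s1^2*s5*a*(ρ:ℂ)^3*Complex.I^2 + (30)*s1^2*s5*a*(ρ:ℂ)^5 + (30)*s1^2*s5*a*(ρ:ℂ)^5*Complex.I^2) * hs4x + ((50)*s1^2*a^2*(ρ:ℂ)*Complex.I + (50)*s1^2*a^2*(ρ:ℂ)*Complex.I^3)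 * hs5x))
  set SS := Submodule.span ℂ (Set.range ![T, X1, X2, X3, X4, X5]) with hSSdef
  have hmT : T ∈ SS := Submodule.subset_span ⟨0, rfl⟩
  have hmX1 : X1 ∈ SS := Submodule.subset_span ⟨1, rfl⟩
  have hmX2 : X2 ∈ SS := Submodule.subset_span ⟨2, rfl⟩
  have hmX3 : X3 ∈ SS := Submodule.subset_span ⟨3, rfl⟩
  have hmX4 : X4 ∈ SS := Submodule.subset_span ⟨4, rfl⟩
  have hmX5 : X5 ∈ SS := Submodule.subset_span ⟨5, rfl⟩
  have hck1 : (((ρ:ℂ)^2-1)*s3) ≠ 0 := mul_ne_zero hR1 hs3n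
  have hmemk1 : k1 ∈ SS := by
    have h2 : (((ρ:ℂ)^2-1)*s3) • k1 ∈ SS := by rw [hek1]; exact (Submodule.add_mem _ (SS.smul_mem ((1)*t1 + (-1)*s3*(ρ:ℂ)^2*Complex.I) hmT) (SS.smul_mem ((-1 : ℂ)) hmX3))
    have h3 := SS.smul_mem ((((ρ:ℂ)^2-1)*s3))⁻¹ h2
    rwa [smul_smul, inv_mul_cancel₀ hck1, one_smul] at h3
  have hck2 : (((ρ:ℂ)^2-1)*s3) ≠ 0 := mul_ne_zero hR1 hs3n
  have hmemk2 : k2 ∈ SS := by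
    have h2 : (((ρ:ℂ)^2-1)*s3) • k2 ∈ SS := by rw [hek2]; exact (Submodule.add_mem _ (SS.smul_mem ((-1)*t1 + (1)*s3*Complex.I) hmT) (SS.smul_mem ((1 : ℂ)) hmX3))
    have h3 := SS.smul_mem ((((ρ:ℂ)^2-1)*s3))⁻¹ h2
    rwa [smul_smul, inv_mul_cancel₀ hck2, one_smul] at h3
  have hci1 : ((2:ℂ)*((ρ:ℂ)^2-1)*s1*s2*s4*s5) ≠ 0 := mul_ne_zero (mul_ne_zero (mul_ne_zero (mul_ne_zero (mul_ne_zero two_ne_zero hR1) hs1) hs2n) hs4n) hs5n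
  have hmemi1 : i1 ∈ SS := by
    have h2 : ((2:ℂ)*((ρ:ℂ)^2-1)*s1*s2*s4*s5) • i1 ∈ SS := by rw [hei1]; exact (Submodule.add_mem _ (Submodule.add_mem _ (Submodule.add_mem _ (SS.smul_mem ((1)*s2*s5*t2*Complex.I + (1)*s2*s4*s5*(ρ:ℂ)^2) hmX1) (SS.smul_mem ((-1)*s1*s4*t3*Complex.I + (1)*s1*s4*s5*(ρ:ℂ)^2) hmX2)) (SS.smul_mem ((-1)*s1*s2*s5*Complex.I) hmX4)) (SS.smul_mem ((1)*s1*s2*s4*Complex.I) hmX5))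
    have h3 := SS.smul_mem (((2:ℂ)*((ρ:ℂ)^2-1)*s1*s2*s4*s5))⁻¹ h2
    rwa [smul_smul, inv_mul_cancel₀ hci1, one_smul] at h3
  have hci2 : ((2:ℂ)*(ρ:ℂ)*((ρ:ℂ)^2-1)*s1*s2*s4*s5) ≠ 0 := mul_ne_zero (mul_ne_zero (mul_ne_zero (mul_ne_zero (mul_ne_zero (mul_ne_zero two_ne_zero hR0) hR1) hs1) hs2n) hs4n) hs5n
  have hmemi2 : i2 ∈ SS := by
    have h2 : ((2:ℂ)*(ρ:ℂ)*((ρ:ℂ)^2-1)*s1*s2*s4*s5) • i2 ∈ SS := by rw [hei2]; exact (Submodule.add_mem _ (Submodule.add_mem _ (Submodule.add_mem _ (SS.smul_mem ((1)*s2*s5*t2*Complex.I + (1)*s2*s4*s5) hmX1) (SS.smul_mem ((-1)*s1*s4*t3*Complex.I + (1)*s1*s4*s5) hmX2)) (SS.smul_mem ((-1)*s1*s2*s5*Complex.I) hmX4)) (SS.smul_mem ((1)*s1*s2*s4*Complex.I) hmX5))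
    have h3 := SS.smul_mem (((2:ℂ)*(ρ:ℂ)*((ρ:ℂ)^2-1)*s1*s2*s4*s5))⁻¹ h2
    rwa [smul_smul, inv_mul_cancel₀ hci2, one_smul] at h3
  have hcj1 : ((2:ℂ)*((ρ:ℂ)^2-1)*s1*s2*s4*s5) ≠ 0 := mul_ne_zero (mul_ne_zero (mul_ne_zero (mul_ne_zero (mul_ne_zero two_ne_zero hR1) hs1) hs2n) hs4n) hs5n
  have hmemj1 : j1 ∈ SS := by
    have h2 : ((2:ℂ)*((ρ:ℂ)^2-1)*s1*s2*s4*s5) • j1 ∈ SS := by rw [hej1]; exact (Submodule.add_mem _ (Submodule.add_mem _ (Submodule.add_mem _ (SS.smul_mem ((1)*s2*s5*t2 + (-1)*s2*s4*s5*(ρ:ℂ)^2*Complex.I) hmX1) (SS.smul_mem ((1)*s1*s4*t3 + (1)*s1*s4*s5*(ρ:ℂ)^2*Complex.I) hmX2)) (SS.smul_mem ((-1)*s1*s2*s5) hmX4)) (SS.smul_mem ((-1)*s1*s2*s4) hmX5))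
    have h3 := SS.smul_mem (((2:ℂ)*((ρ:ℂ)^2-1)*s1*s2*s4*s5))⁻¹ h2
    rwa [smul_smul, inv_mul_cancel₀ hcj1, one_smul] at h3
  have hcj2 : ((2:ℂ)*(ρ:ℂ)*((ρ:ℂ)^2-1)*s1*s2*s4*s5) ≠ 0 := mul_ne_zero (mul_ne_zero (mul_ne_zero (mul_ne_zero (mul_ne_zero (mul_ne_zero two_ne_zero hR0) hR1) hs1) hs2n) hs4n) hs5n
  have hmemj2 : j2 ∈ SS := by
    have h2 : ((2:ℂ)*(ρ:ℂ)*((ρ:ℂ)^2-1)*s1*s2*s4*s5) • j2 ∈ SS := by rw [hej2]; exact (Submodule.add_mem _ (Submodule.add_mem _ (Submodule.add_mem _ (SS.smul_mem ((1)*s2*s5*t2 + (-1)*s2*s4*s5*Complex.I) hmX1) (SS.smul_mem ((1)*s1*s4*t3 + (1)*s1*s4*s5*Complex.I) hmX2)) (SS.smul_mem ((-1)*s1*s2*s5) hmX4)) (SS.smul_mem ((-1)*s1*s2*s4) hmX5))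
    have h3 := SS.smul_mem (((2:ℂ)*(ρ:ℂ)*((ρ:ℂ)^2-1)*s1*s2*s4*s5))⁻¹ h2
    rwa [smul_smul, inv_mul_cancel₀ hcj2, one_smul] at h3
  have hspan : Submodule.span ℂ (Set.range ![T, X1, X2, X3, X4, X5]) = ⊤ := by
    rw [eq_top_iff, ← hlspan, Submodule.span_le]
    rintro x ⟨i, rfl⟩
    fin_cases i
    exacts [hmemi1, hmemj1, hmemk1, hmemi2, hmemj2, hmemk2]
  have hind : LinearIndependent ℂ ![T, X1, X2, X3, X4, X5] := by
    have B := Module.Basis.mk hlindep (le_of_eq hlspan.symm)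
    have : FiniteDimensional ℂ L := Module.Finite.of_basis B
    have hr : Module.finrank ℂ L = 6 := by rw [Module.finrank_eq_card_basis B]; simp
    exact linearIndependent_of_top_le_span_of_card_eq_finrank (le_of_eq hspan.symm) (by simp [hr])
  exact ⟨hind, hspan, hbT1, hbT2, hbT3, hbT4, hbT5, hb12, hb13, hb14, hb15, hb23, hb24, hb25, hb34, hb35, hb45⟩
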